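/- arXiv:2211.06999 — 10 statements merged into one kernel-verified Lean document; each statement's English description precedes it below -/
import Mathlib

section
/- Banded raising expansion (Proposition 2.1, part 2): For every natural number n, the polynomial identity p n = ∑_{k ∈ Finset.Icc (n − d) n} (∫ (p n).eval t * (q k).eval t * φ.eval t ∂μ) • (q k) holds (with truncated subtraction n − d in ℕ). That is, each μ-orthonormal polynomial p_n is a linear combination of the (φ·μ)-orthonormal polynomials q_{n−d}, …, q_n with coefficients r_{k,n} = ⟨p_n(w), p_k(φw)⟩_{φw}. -/
open MeasureTheory Polynomial


lemma span_aux (f : ℕ → Polynomial ℝ) (hf : ∀ k, (f k).degree = k) :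
    ∀ m : ℕ, ∀ r : Polynomial ℝ, r.degree < (m : WithBot ℕ) →
      ∃ a : ℕ → ℝ, r = ∑ k ∈ Finset.range m, a k • f k := by
  intro m
  induction m with
  | zero =>
    intro r hr
    refine ⟨fun _ => 0, ?_⟩
    have : r = 0 := by
      rw [← Polynomial.degree_eq_bot]
      exact Nat.WithBot.lt_zero_iff.mp (by exact_mod_cast hr)
    simp [this]
  | succ m ih =>
    intro r hr
    by_cases h : r.degree < (m : WithBot ℕ)
    · obtain ⟨a, ha⟩ := ih r h
      refine ⟨fun k => if k = m then 0 else a k, ?_⟩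
      rw [Finset.sum_range_succ]
      beta_reduce
      rw [if_pos rfl, zero_smul, add_zero, ha]
      exact (Finset.sum_congr rfl fun k hk => by
        rw [if_neg (Finset.mem_range.mp hk).ne]).symm
    · have hr' : r.degree ≤ (m : WithBot ℕ) := by
        by_cases h0 : r = 0
        · simp [h0]
        · rw [Polynomial.degree_eq_natDegree h0] at hr ⊢
          exact_mod_cast Nat.lt_succ_iff.mp (by exact_mod_cast hr)
      have hdeg : r.degree = (m : WithBot ℕ) := le_antisymm hr' (not_lt.mp h)
      have hr0 : r ≠ 0 := fun h0 => by simp [h0] at hdeg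
      have hfm0 : f m ≠ 0 := fun h0 => by
        have := hf m; rw [h0, Polynomial.degree_zero] at this; exact absurd this (by simp)
      set c : ℝ := r.leadingCoeff / (f m).leadingCoeff with hc
      have hcne : c ≠ 0 := div_ne_zero (leadingCoeff_ne_zero.mpr hr0) (leadingCoeff_ne_zero.mpr hfm0)
      have hsmul : c • f m = C c * f m := smul_eq_C_mul c
      have hdsmul : (c • f m).degree = (m : WithBot ℕ) := by
        rw [hsmul, degree_C_mul (by exact hcne)]; exact hf m
      have hlc : (c • f m).leadingCoeff = r.leadingCoeff := by
        rw [hsmul, leadingCoeff_mul, leadingCoeff_C, hc,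
          div_mul_cancel₀ _ (leadingCoeff_ne_zero.mpr hfm0)]
      have hsub : (r - c • f m).degree < (m : WithBot ℕ) := by
        rw [← hdeg]
        exact degree_sub_lt (hdeg.trans hdsmul.symm) hr0 hlc.symm
      obtain ⟨a, ha⟩ := ih _ hsub
      refine ⟨fun k => if k = m then c else a k, ?_⟩
      rw [Finset.sum_range_succ]
      beta_reduce
      rw [if_pos rfl]
      have hcongr : ∑ k ∈ Finset.range m, (if k = m then c else a k) • f k
          = ∑ k ∈ Finset.range m, a k • f k :=
        Finset.sum_congr rfl fun k hk => by rw [if_neg (Finset.mem_range.mp hk).ne]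
      rw [hcongr, ← ha]
      abel

/-- Banded raising expansion. -/
theorem raising_expansion
    (μ : Measure ℝ)
    (hint : ∀ P : Polynomial ℝ, Integrable (fun t => P.eval t) μ)
    (d : ℕ) (φ : Polynomial ℝ) (hφ : φ.degree = d)
    (p q : ℕ → Polynomial ℝ)
    (hpdeg : ∀ n, (p n).degree = n)
    (hqdeg : ∀ n, (q n).degree = n)
    (hp : ∀ i j, (∫ t, (p i).eval t * (p j).eval t ∂μ) = if i = j then 1 else 0)
    (hq : ∀ i j, (∫ t, (q i).eval t * (q j).eval t * φ.eval t ∂μ) = if i = j then 1 else 0)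
    (n : ℕ) :
    p n = ∑ k ∈ Finset.Icc (n - d) n,
      (∫ t, (p n).eval t * (q k).eval t * φ.eval t ∂μ) • q k := by
  classical
  obtain ⟨a, ha⟩ := span_aux q hqdeg (n+1) (p n)
    (by rw [hpdeg n]; exact_mod_cast Nat.lt_succ_self n)
  -- coefficient identification
  have hcoeff : ∀ j ∈ Finset.range (n+1),
      (∫ t, (p n).eval t * (q j).eval t * φ.eval t ∂μ) = a j := by
    intro j hj
    have hpt : (fun t => (p n).eval t * (q j).eval t * φ.eval t)
        = fun t => ∑ k ∈ Finset.range (n+1),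
            a k * ((q k).eval t * (q j).eval t * φ.eval t) := by
      funext t
      rw [ha, Polynomial.eval_finset_sum, Finset.sum_mul, Finset.sum_mul]
      refine Finset.sum_congr rfl fun k _ => ?_
      simp [Polynomial.eval_smul]
      ring
    rw [hpt, integral_finset_sum _ (fun k _ => by
      have := (hint (q k * q j * φ)).const_mul (a k)
      simpa [Polynomial.eval_mul, mul_assoc] using this)]
    have : ∀ k ∈ Finset.range (n+1),
        (∫ t, a k * ((q k).eval t * (q j).eval t * φ.eval t) ∂μ)
        = a k * (if k = j then 1 else 0) := fun k _ => by
      rw [integral_const_mul, hq k j]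
    rw [Finset.sum_congr rfl this]
    simp [Finset.mem_range.mp hj]
  -- vanishing of low coefficients
  have hvanish : ∀ k ∈ Finset.range (n+1), k ∉ Finset.Icc (n-d) n →
      (∫ t, (p n).eval t * (q k).eval t * φ.eval t ∂μ) • q k = 0 := by
    intro k hk hk2
    have hkn : k ≤ n := Nat.lt_succ_iff.mp (Finset.mem_range.mp hk)
    have hkd : k + d < n := by
      simp only [Finset.mem_Icc, not_and_or, not_le] at hk2
      omega
    have hdeg : (q k * φ).degree < (n : WithBot ℕ) := by
      rw [Polynomial.degree_mul, hqdeg k, hφ]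
      exact_mod_cast hkd
    obtain ⟨b, hb⟩ := span_aux p hpdeg n (q k * φ) hdeg
    have hpt : (fun t => (p n).eval t * (q k).eval t * φ.eval t)
        = fun t => ∑ j ∈ Finset.range n,
            b j * ((p n).eval t * (p j).eval t) := by
      funext t
      rw [mul_assoc, ← Polynomial.eval_mul, hb, Polynomial.eval_finset_sum, Finset.mul_sum]
      refine Finset.sum_congr rfl fun j _ => ?_
      simp [Polynomial.eval_smul]
      ring
    have hzero : (∫ t, (p n).eval t * (q k).eval t * φ.eval t ∂μ) = 0 := by
      rw [hpt, integral_finset_sum _ (fun j _ => by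
        have := (hint (p n * p j)).const_mul (b j)
        simpa [Polynomial.eval_mul] using this)]
      have : ∀ j ∈ Finset.range n,
          (∫ t, b j * ((p n).eval t * (p j).eval t) ∂μ)
          = b j * (if n = j then 1 else 0) := fun j _ => by
        rw [integral_const_mul, hp n j]
      rw [Finset.sum_congr rfl this]
      refine Finset.sum_eq_zero fun j hj => ?_
      rw [if_neg (Finset.mem_range.mp hj).ne', mul_zero]
    rw [hzero, zero_smul]
  have hsub : Finset.Icc (n-d) n ⊆ Finset.range (n+1) := fun k hk =>
    Finset.mem_range.mpr (Nat.lt_succ_of_le (Finset.mem_Icc.mp hk).2)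
  rw [Finset.sum_subset hsub hvanish]
  calc p n = ∑ k ∈ Finset.range (n+1), a k • q k := ha
    _ = ∑ k ∈ Finset.range (n+1),
        (∫ t, (p n).eval t * (q k).eval t * φ.eval t ∂μ) • q k :=
      (Finset.sum_congr rfl fun k hk => by rw [hcoeff k hk]).symm
end

section
/- Dimension formula for the degree filtration of the coordinate ring of the curve y^m = φ(x) (algebraic core of Proposition 3.1, dim 𝒱_n(γ_{m,d}, w) = min{n+1, max{d,m}}): Let m = 1 or m = 2 and let d ≥ 1. For each natural number n, let F n be the submodule of the quotient R ⧸ I_m obtained as the image, under the quotient map, of the ℝ-submodule of R consisting of polynomials of total degree at most n. Then Module.finrank ℝ (F n) = ∑_{ℓ=0}^{n} min (ℓ + 1) (max d m). In particular, the dimension of the degree-n part F n / F (n−1) equals min{n+1, max{d,m}}. -/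
open Polynomial

noncomputable section
namespace CurveFil


lemma linearIndependent_of_natDegree_injective {ι : Type*} (v : ι → ℝ[X])
    (h0 : ∀ i, v i ≠ 0)
    (hinj : ∀ i j, (v i).natDegree = (v j).natDegree → i = j) :
    LinearIndependent ℝ v := by
  classical
  rw [linearIndependent_iff']
  intro t
  induction t using Finset.strongInduction with
  | _ t ih =>
    intro g hsum i hi
    have hne : t.Nonempty := ⟨i, hi⟩
    obtain ⟨i₀, hi₀, hmax⟩ := t.exists_max_image (fun i => (v i).natDegree) hne
    have hg0 : g i₀ = 0 := by
      have hc := congrArg (fun p => p.coeff ((v i₀).natDegree)) hsum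
      simp only [Polynomial.finset_sum_coeff, Polynomial.coeff_smul, Polynomial.coeff_zero,
        smul_eq_mul] at hc
      rw [Finset.sum_eq_single i₀] at hc
      · have := (h0 i₀)
        rw [← Polynomial.leadingCoeff] at hc
        rcases mul_eq_zero.mp hc with h | h
        · exact h
        · exact absurd h (Polynomial.leadingCoeff_ne_zero.mpr (h0 i₀))
      · intro j hj hji
        have hlt : (v j).natDegree < (v i₀).natDegree := by
          rcases lt_or_eq_of_le (hmax j hj) with h | h
          · exact h
          · exact absurd (hinj _ _ h) hji
        rw [Polynomial.coeff_eq_zero_of_natDegree_lt hlt, mul_zero]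
      · intro h; exact absurd hi₀ h
    by_cases hii : i = i₀
    · rw [hii]; exact hg0
    · have hsum' : ∑ j ∈ t.erase i₀, g j • v j = 0 := by
        have h2 := Finset.add_sum_erase t (fun j => g j • v j) hi₀
        simp only [hg0, zero_smul, zero_add] at h2
        rw [h2, hsum]
      exact ih (t.erase i₀) (Finset.erase_ssubset hi₀) g hsum' i
        (Finset.mem_erase.mpr ⟨hii, hi⟩)

abbrev R2 := MvPolynomial (Fin 2) ℝ

variable (m : ℕ) (φ : ℝ[X])


def gcur : R2 := MvPolynomial.X 1 ^ m - Polynomial.aeval (MvPolynomial.X 0) φ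
def Icur : Ideal R2 := Ideal.span {gcur m φ}
def qmap : R2 →ₐ[ℝ] (R2 ⧸ Icur m φ) := Ideal.Quotient.mkₐ ℝ _
def mon (i j : ℕ) : R2 := MvPolynomial.X 0 ^ i * MvPolynomial.X 1 ^ j

lemma qmap_rel (i j : ℕ) :
    qmap m φ (mon i (j + m)) =
      ∑ e ∈ Finset.range (φ.natDegree + 1), φ.coeff e • qmap m φ (mon (i + e) j) := by
  have hY : qmap m φ (MvPolynomial.X 1 ^ m) = qmap m φ (Polynomial.aeval (MvPolynomial.X 0) φ) := by
    rw [qmap, Ideal.Quotient.mkₐ_eq_mk, Ideal.Quotient.eq]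
    exact Ideal.subset_span rfl
  calc qmap m φ (mon i (j + m))
      = qmap m φ (mon i j) * qmap m φ (MvPolynomial.X 1 ^ m) := by
        rw [← map_mul]; congr 1; simp [mon, pow_add]; ring
    _ = qmap m φ (mon i j * Polynomial.aeval (MvPolynomial.X 0) φ) := by rw [hY, ← map_mul]
    _ = ∑ e ∈ Finset.range (φ.natDegree + 1), φ.coeff e • qmap m φ (mon (i + e) j) := by
        rw [Polynomial.aeval_eq_sum_range, Finset.mul_sum, map_sum]
        refine Finset.sum_congr rfl fun e _ => ?_
        rw [mul_smul_comm, map_smul]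
        congr 2
        simp [mon, pow_add]; ring

def Scur (d m n : ℕ) : Finset (ℕ × ℕ) :=
  (Finset.range (n+1) ×ˢ Finset.range (n+1)).filter
    (fun p => p.1 + p.2 ≤ n ∧ (if m ≤ d then p.1 < d else p.2 < m))

lemma mem_Scur {d m n : ℕ} {p : ℕ × ℕ} :
    p ∈ Scur d m n ↔ p.1 + p.2 ≤ n ∧ (if m ≤ d then p.1 < d else p.2 < m) := by
  simp only [Scur, Finset.mem_filter, Finset.mem_product, Finset.mem_range]
  constructor
  · rintro ⟨-, h⟩; exact h
  · rintro ⟨h1, h2⟩; exact ⟨⟨by omega, by omega⟩, h1, h2⟩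

lemma ball_mem_span (hm0 : 0 < m) (hd1 : 1 ≤ φ.natDegree) (n : ℕ) :
    ∀ i j : ℕ, i + j ≤ n →
      qmap m φ (mon i j) ∈ Submodule.span ℝ
        ((fun p : ℕ × ℕ => qmap m φ (mon p.1 p.2)) '' (Scur φ.natDegree m n)) := by
  have hφ0 : φ ≠ 0 := fun h => by rw [h, Polynomial.natDegree_zero] at hd1; omega
  have hc : φ.coeff φ.natDegree ≠ 0 := fun h => hφ0 (Polynomial.leadingCoeff_eq_zero.mp h)
  set d := φ.natDegree with hdd
  by_cases hdm : m ≤ d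
  · -- reduce in i
    intro i
    induction i using Nat.strong_induction_on with
    | _ i ih =>
      intro j hij
      by_cases hi : i < d
      · exact Submodule.subset_span ⟨(i, j), mem_Scur.mpr ⟨hij, by rw [if_pos hdm]; exact hi⟩, rfl⟩
      · push_neg at hi
        have hrel := qmap_rel m φ (i - d) j
        rw [Finset.sum_range_succ] at hrel
        have hidd : i - d + d = i := by omega
        rw [hidd] at hrel
        have heq : qmap m φ (mon i j) = (φ.coeff d)⁻¹ •
            (qmap m φ (mon (i - d) (j + m)) -
              ∑ e ∈ Finset.range d, φ.coeff e • qmap m φ (mon (i - d + e) j)) := by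
          rw [hrel]
          rw [add_sub_cancel_left, smul_smul, inv_mul_cancel₀ hc, one_smul]
        rw [heq]
        refine Submodule.smul_mem _ _ (sub_mem ?_ (Submodule.sum_mem _ fun e he => ?_))
        · exact ih (i - d) (by omega) (j + m) (by omega)
        · have he' : e < d := Finset.mem_range.mp he
          exact Submodule.smul_mem _ _ (ih (i - d + e) (by omega) j (by omega))
  · -- reduce in j
    push_neg at hdm
    intro i j
    induction j using Nat.strong_induction_on generalizing i with
    | _ j ih =>
      intro hij
      by_cases hj : j < m
      · exact Submodule.subset_span ⟨(i, j), mem_Scur.mpr ⟨hij, by rw [if_neg (by omega)]; exact hj⟩, rfl⟩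
      · push_neg at hj
        have hrel := qmap_rel m φ i (j - m)
        have hjm : j - m + m = j := by omega
        rw [hjm] at hrel
        rw [hrel]
        refine Submodule.sum_mem _ fun e he => ?_
        have he' : e < d + 1 := Finset.mem_range.mp he
        exact Submodule.smul_mem _ _ (ih (j - m) (by omega) (i + e) (by omega))

lemma mon_eq_monomial (v : Fin 2 →₀ ℕ) :
    mon (v 0) (v 1) = MvPolynomial.monomial v (1 : ℝ) := by
  have hv : Finsupp.single (0 : Fin 2) (v 0) + Finsupp.single 1 (v 1) = v := by
    ext a; fin_cases a <;> simp
  rw [mon, MvPolynomial.X_pow_eq_monomial, MvPolynomial.X_pow_eq_monomial,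
    MvPolynomial.monomial_mul, one_mul, hv]

lemma totalDegree_mon_le (i j : ℕ) : (mon i j).totalDegree ≤ i + j := by
  refine le_trans (MvPolynomial.totalDegree_mul _ _) ?_
  rw [MvPolynomial.totalDegree_X_pow, MvPolynomial.totalDegree_X_pow]

lemma map_eq (hm0 : 0 < m) (hd1 : 1 ≤ φ.natDegree) (n : ℕ) :
    Submodule.map (qmap m φ).toLinearMap (MvPolynomial.restrictTotalDegree (Fin 2) ℝ n)
      = Submodule.span ℝ
        ((fun p : ℕ × ℕ => qmap m φ (mon p.1 p.2)) '' (Scur φ.natDegree m n)) := by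
  apply le_antisymm
  · rintro x ⟨p, hp, rfl⟩
    rw [SetLike.mem_coe, MvPolynomial.mem_restrictTotalDegree] at hp
    have hrepr : (qmap m φ).toLinearMap p
        = ∑ v ∈ p.support, MvPolynomial.coeff v p • qmap m φ (mon (v 0) (v 1)) := by
      conv_lhs => rw [show p = ∑ v ∈ p.support, MvPolynomial.monomial v (MvPolynomial.coeff v p)
        from MvPolynomial.as_sum p]
      rw [map_sum]
      refine Finset.sum_congr rfl fun v _ => ?_
      rw [mon_eq_monomial, show MvPolynomial.monomial v (MvPolynomial.coeff v p)
          = MvPolynomial.coeff v p • MvPolynomial.monomial v (1 : ℝ) by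
        rw [MvPolynomial.smul_monomial, smul_eq_mul, mul_one]]
      exact map_smul _ _ _
    rw [hrepr]
    refine Submodule.sum_mem _ fun v hv => Submodule.smul_mem _ _ ?_
    refine ball_mem_span m φ hm0 hd1 n (v 0) (v 1) ?_
    have h1 : (v.sum fun _ e => e) ≤ n := le_trans (MvPolynomial.le_totalDegree hv) hp
    have h2 : (v.sum fun _ e => e) = v 0 + v 1 := by
      rw [Finsupp.sum_fintype _ _ (fun _ => rfl), Fin.sum_univ_two]
    omega
  · rw [Submodule.span_le]
    rintro x ⟨⟨i, j⟩, hp, rfl⟩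
    refine ⟨mon i j, ?_, rfl⟩
    rw [SetLike.mem_coe, MvPolynomial.mem_restrictTotalDegree]
    exact le_trans (totalDegree_mon_le i j) (mem_Scur.mp hp).1


def qpoly : (ℝ[X])[X] := Polynomial.X ^ m - Polynomial.C φ

lemma qpoly_monic (hm0 : 0 < m) : (qpoly m φ).Monic := by
  refine Polynomial.monic_X_pow_sub (lt_of_le_of_lt (Polynomial.degree_C_le) ?_)
  exact_mod_cast hm0

lemma qpoly_natDegree : (qpoly m φ).natDegree = m := Polynomial.natDegree_X_pow_sub_C

abbrev Bmod := AdjoinRoot (qpoly m φ)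

def pbB (hm0 : 0 < m) : PowerBasis ℝ[X] (Bmod m φ) := AdjoinRoot.powerBasis' (qpoly_monic m φ hm0)

lemma root_pow_m : AdjoinRoot.root (qpoly m φ) ^ m = AdjoinRoot.of (qpoly m φ) φ := by
  have h := AdjoinRoot.mk_self (f := qpoly m φ)
  rw [qpoly, map_sub, sub_eq_zero, map_pow, AdjoinRoot.mk_X, AdjoinRoot.mk_C] at h
  exact h

def ψmod : R2 →ₐ[ℝ] Bmod m φ :=
  MvPolynomial.aeval (fun i : Fin 2 =>
    if i = 0 then AdjoinRoot.of (qpoly m φ) Polynomial.X else AdjoinRoot.root (qpoly m φ))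

lemma ψmod_X0 : ψmod m φ (MvPolynomial.X 0) = AdjoinRoot.of (qpoly m φ) Polynomial.X := by
  simp [ψmod]

lemma ψmod_X1 : ψmod m φ (MvPolynomial.X 1) = AdjoinRoot.root (qpoly m φ) := by
  simp [ψmod]

lemma ψmod_gcur : ψmod m φ (gcur m φ) = 0 := by
  rw [gcur, map_sub, map_pow, ψmod_X1]
  rw [root_pow_m m φ]
  rw [sub_eq_zero]
  have h1 : ψmod m φ (Polynomial.aeval (MvPolynomial.X 0) φ)
      = Polynomial.aeval (ψmod m φ (MvPolynomial.X 0)) φ :=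
    (Polynomial.aeval_algHom_apply (ψmod m φ) (MvPolynomial.X 0) φ).symm
  rw [h1, ψmod_X0, ← AdjoinRoot.algebraMap_eq,
    Polynomial.aeval_algebraMap_apply (Bmod m φ) (Polynomial.X : ℝ[X]) φ]
  simp

def ψbar : (R2 ⧸ Icur m φ) →ₐ[ℝ] Bmod m φ :=
  Ideal.Quotient.liftₐ _ (ψmod m φ) (by
    intro a ha
    rw [Icur, Ideal.mem_span_singleton] at ha
    obtain ⟨r, rfl⟩ := ha
    rw [map_mul, ψmod_gcur, zero_mul])

lemma ψbar_qmap (p : R2) : ψbar m φ (qmap m φ p) = ψmod m φ p := by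
  rw [qmap, Ideal.Quotient.mkₐ_eq_mk, ψbar, Ideal.Quotient.liftₐ_apply]
  rfl

def Lmap (hm0 : 0 < m) : (R2 ⧸ Icur m φ) →ₗ[ℝ] ℝ[X] :=
  ((Finsupp.lsum ℝ fun r : Fin (pbB m φ hm0).dim =>
      (LinearMap.mulLeft ℝ ((Polynomial.X : ℝ[X]) ^ (r : ℕ))).comp
        (Polynomial.expand ℝ m).toLinearMap).comp
    (((pbB m φ hm0).basis.repr.restrictScalars ℝ).toLinearMap)).comp
    (ψbar m φ).toLinearMap

def Ppoly (i j : ℕ) : ℝ[X] :=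
  Polynomial.X ^ (j % m) * (Polynomial.X ^ (m * i) * (Polynomial.expand ℝ m φ) ^ (j / m))

lemma ψmod_mon (i j : ℕ) :
    ψmod m φ (mon i j) =
      (Polynomial.X ^ i * φ ^ (j / m)) • AdjoinRoot.root (qpoly m φ) ^ (j % m) := by
  rw [mon, map_mul, map_pow, map_pow, ψmod_X0, ψmod_X1]
  have hj : AdjoinRoot.root (qpoly m φ) ^ j
      = AdjoinRoot.of (qpoly m φ) (φ ^ (j / m)) * AdjoinRoot.root (qpoly m φ) ^ (j % m) := by
    conv_lhs => rw [← Nat.div_add_mod j m, pow_add, pow_mul, root_pow_m m φ, ← map_pow]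
  rw [hj, Algebra.smul_def, ← AdjoinRoot.algebraMap_eq, map_mul, ← mul_assoc]
  rw [map_pow, map_pow]

lemma Lmap_qmap_mon (hm0 : 0 < m) (i j : ℕ) :
    Lmap m φ hm0 (qmap m φ (mon i j)) = Ppoly m φ i j := by
  have hjm : j % m < (pbB m φ hm0).dim := by
    rw [pbB, AdjoinRoot.powerBasis'_dim, qpoly_natDegree]
    exact Nat.mod_lt _ hm0
  have hbasis : AdjoinRoot.root (qpoly m φ) ^ (j % m)
      = (pbB m φ hm0).basis ⟨j % m, hjm⟩ := by
    rw [(pbB m φ hm0).basis_eq_pow ⟨j % m, hjm⟩]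
    congr 1
  rw [Lmap, LinearMap.comp_apply, LinearMap.comp_apply, AlgHom.toLinearMap_apply,
    ψbar_qmap, ψmod_mon m φ, hbasis]
  rw [LinearEquiv.coe_coe, LinearEquiv.restrictScalars_apply, map_smul,
    Module.Basis.repr_self, Finsupp.smul_single, smul_eq_mul, mul_one, Finsupp.lsum_single]
  rw [LinearMap.comp_apply, AlgHom.toLinearMap_apply, LinearMap.mulLeft_apply]
  rw [map_mul, map_pow, map_pow, Polynomial.expand_X]
  rw [Ppoly, ← pow_mul]



lemma nat_uniq {m r r' A A' : ℕ} (hr : r < m) (hr' : r' < m)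
    (h : r + m * A = r' + m * A') : r = r' ∧ A = A' := by
  have hm0 : 0 < m := lt_of_le_of_lt (Nat.zero_le r) hr
  have hrr : r = r' := by
    rw [← Nat.mod_eq_of_lt hr, ← Nat.mod_eq_of_lt hr',
      ← Nat.add_mul_mod_self_left r m A, ← Nat.add_mul_mod_self_left r' m A', h]
  refine ⟨hrr, Nat.eq_of_mul_eq_mul_left hm0 ?_⟩
  omega

lemma Scur_card (d m n : ℕ) (hd1 : 1 ≤ d) (hm0 : 0 < m) :
    (Scur d m n).card = ∑ ℓ ∈ Finset.range (n+1), min (ℓ+1) (max d m) := by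
  by_cases hdm : m ≤ d
  · have hM : max d m = d := max_eq_left hdm
    have hS : Scur d m n = (Finset.range (n+1)).biUnion (fun ℓ =>
        (Finset.range (min (ℓ+1) d)).image (fun v => (v, ℓ - v))) := by
      ext ⟨i, j⟩
      simp only [mem_Scur, if_pos hdm, Finset.mem_biUnion, Finset.mem_range,
        Finset.mem_image, Prod.mk.injEq]
      constructor
      · rintro ⟨h1, h2⟩
        exact ⟨i + j, by omega, i, by omega, rfl, by omega⟩
      · rintro ⟨ℓ, hℓ, v, hv, rfl, rfl⟩
        omega
    rw [hS, Finset.card_biUnion, hM]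
    · refine Finset.sum_congr rfl fun ℓ _ => ?_
      rw [Finset.card_image_of_injOn, Finset.card_range]
      intro a _ b _ hab
      exact (Prod.mk.injEq _ _ _ _ ▸ hab).1
    · intro ℓ1 _ ℓ2 _ hne
      simp only [Finset.disjoint_left, Finset.mem_image, Finset.mem_range]
      rintro p ⟨v, hv, rfl⟩ ⟨v', hv', h⟩
      rw [Prod.mk.injEq] at h
      omega
  · have hM : max d m = m := max_eq_right (by omega)
    have hS : Scur d m n = (Finset.range (n+1)).biUnion (fun ℓ =>
        (Finset.range (min (ℓ+1) m)).image (fun v => (ℓ - v, v))) := by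
      ext ⟨i, j⟩
      simp only [mem_Scur, if_neg hdm, Finset.mem_biUnion, Finset.mem_range,
        Finset.mem_image, Prod.mk.injEq]
      constructor
      · rintro ⟨h1, h2⟩
        exact ⟨i + j, by omega, j, by omega, by omega, rfl⟩
      · rintro ⟨ℓ, hℓ, v, hv, rfl, rfl⟩
        omega
    rw [hS, Finset.card_biUnion, hM]
    · refine Finset.sum_congr rfl fun ℓ _ => ?_
      rw [Finset.card_image_of_injOn, Finset.card_range]
      intro a _ b _ hab
      exact (Prod.mk.injEq _ _ _ _ ▸ hab).2
    · intro ℓ1 _ ℓ2 _ hne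
      simp only [Finset.disjoint_left, Finset.mem_image, Finset.mem_range]
      rintro p ⟨v, hv, rfl⟩ ⟨v', hv', h⟩
      rw [Prod.mk.injEq] at h
      omega

lemma D_inj (d m n : ℕ) (hd1 : 1 ≤ d) (hm0 : 0 < m) {p p' : ℕ × ℕ}
    (hp : p ∈ Scur d m n) (hp' : p' ∈ Scur d m n)
    (h : p.2 % m + (m * p.1 + (p.2 / m) * (d * m))
       = p'.2 % m + (m * p'.1 + (p'.2 / m) * (d * m))) : p = p' := by
  obtain ⟨i, j⟩ := p
  obtain ⟨i', j'⟩ := p'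
  simp only at h
  have harr : ∀ a b : ℕ, m * a + (b / m) * (d * m) = m * (a + d * (b / m)) := by
    intro a b; ring
  rw [harr i j, harr i' j'] at h
  obtain ⟨h1, h2⟩ := nat_uniq (Nat.mod_lt _ hm0) (Nat.mod_lt _ hm0) h
  rw [mem_Scur] at hp hp'
  by_cases hdm : m ≤ d
  · rw [if_pos hdm] at hp hp'
    obtain ⟨h3, h4⟩ := nat_uniq hp.2 hp'.2 h2
    have hj := Nat.div_add_mod j m
    have hj' := Nat.div_add_mod j' m
    have : m * (j / m) = m * (j' / m) := by rw [h4]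
    simp only [Prod.mk.injEq]
    omega
  · rw [if_neg hdm] at hp hp'
    push_neg at hdm
    have hj : j % m = j := Nat.mod_eq_of_lt hp.2
    have hj' : j' % m = j' := Nat.mod_eq_of_lt hp'.2
    have hjd : j / m = 0 := Nat.div_eq_of_lt hp.2
    have hjd' : j' / m = 0 := Nat.div_eq_of_lt hp'.2
    rw [hj, hj'] at h1
    rw [hjd, hjd'] at h2
    simp only [Prod.mk.injEq]
    omega



lemma Ppoly_ne_zero (hφ0 : φ ≠ 0) (hm0 : 0 < m) (i j : ℕ) :
    Ppoly m φ i j ≠ 0 :=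
  mul_ne_zero (pow_ne_zero _ Polynomial.X_ne_zero)
    (mul_ne_zero (pow_ne_zero _ Polynomial.X_ne_zero)
      (pow_ne_zero _ (fun h => hφ0 ((Polynomial.expand_eq_zero hm0).mp h))))

lemma Ppoly_natDegree (hφ0 : φ ≠ 0) (hm0 : 0 < m) (i j : ℕ) :
    (Ppoly m φ i j).natDegree = j % m + (m * i + (j / m) * (φ.natDegree * m)) := by
  rw [Ppoly, Polynomial.natDegree_mul (pow_ne_zero _ Polynomial.X_ne_zero)
      (mul_ne_zero (pow_ne_zero _ Polynomial.X_ne_zero)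
        (pow_ne_zero _ (fun h => hφ0 ((Polynomial.expand_eq_zero hm0).mp h)))),
    Polynomial.natDegree_mul (pow_ne_zero _ Polynomial.X_ne_zero)
      (pow_ne_zero _ (fun h => hφ0 ((Polynomial.expand_eq_zero hm0).mp h))),
    Polynomial.natDegree_X_pow, Polynomial.natDegree_X_pow, Polynomial.natDegree_pow,
    Polynomial.natDegree_expand]

theorem main (d : ℕ) (hd : 1 ≤ d) (hφ : φ.degree = d)
    (hm : m = 1 ∨ m = 2) (n : ℕ) :
    Module.finrank ℝ (Submodule.map (qmap m φ).toLinearMap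
        (MvPolynomial.restrictTotalDegree (Fin 2) ℝ n))
      = ∑ ℓ ∈ Finset.range (n + 1), min (ℓ + 1) (max d m) := by
  have hm0 : 0 < m := by rcases hm with h | h <;> omega
  have hnd : φ.natDegree = d := Polynomial.natDegree_eq_of_degree_eq_some hφ
  subst hnd
  have hd1 : 1 ≤ φ.natDegree := hd
  have hφ0 : φ ≠ 0 := fun h => by rw [h, Polynomial.natDegree_zero] at hd1; omega
  rw [map_eq m φ hm0 hd1 n]
  have himg : ((fun p : ℕ × ℕ => qmap m φ (mon p.1 p.2)) '' ↑(Scur φ.natDegree m n))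
      = Set.range (fun p : {p // p ∈ Scur φ.natDegree m n} => qmap m φ (mon p.1.1 p.1.2)) :=
    Set.image_eq_range _ _
  have hli : LinearIndependent ℝ
      (fun p : {p // p ∈ Scur φ.natDegree m n} => qmap m φ (mon p.1.1 p.1.2)) := by
    apply LinearIndependent.of_comp (Lmap m φ hm0)
    have hcomp : (⇑(Lmap m φ hm0) ∘ fun p : {p // p ∈ Scur φ.natDegree m n} =>
        qmap m φ (mon p.1.1 p.1.2)) = fun p => Ppoly m φ p.1.1 p.1.2 :=
      funext fun p => Lmap_qmap_mon m φ hm0 p.1.1 p.1.2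
    rw [hcomp]
    apply linearIndependent_of_natDegree_injective
    · intro p
      exact Ppoly_ne_zero m φ hφ0 hm0 _ _
    · intro p p' h
      apply Subtype.ext
      refine D_inj φ.natDegree m n hd1 hm0 p.2 p'.2 ?_
      rw [Ppoly_natDegree m φ hφ0 hm0, Ppoly_natDegree m φ hφ0 hm0] at h
      exact h
  rw [himg, finrank_span_eq_card hli, Fintype.card_coe,
    Scur_card φ.natDegree m n hd1 hm0]

end CurveFil
end

/-- Dimension formula for the degree filtration of the coordinate ring of the
curve `y^m = φ(x)`: the image `F n` in `R ⧸ I_m` of the polynomials of total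
degree at most `n` has dimension `∑_{ℓ=0}^{n} min (ℓ+1) (max d m)`. -/
theorem finrank_degree_filtration_curve
    (d : ℕ) (hd : 1 ≤ d) (φ : Polynomial ℝ) (hφ : φ.degree = d)
    (m : ℕ) (hm : m = 1 ∨ m = 2) (n : ℕ) :
    Module.finrank ℝ
      ((MvPolynomial.restrictTotalDegree (Fin 2) ℝ n).map
        (Ideal.Quotient.mkₐ ℝ (Ideal.span
          {(MvPolynomial.X 1 : MvPolynomial (Fin 2) ℝ) ^ m -
            Polynomial.aeval (MvPolynomial.X 0 : MvPolynomial (Fin 2) ℝ) φ})).toLinearMap)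
      = ∑ ℓ ∈ Finset.range (n + 1), min (ℓ + 1) (max d m) :=
  CurveFil.main m φ d hd hφ hm n
end

section
/- Spanning property of the monomial basis ℬ_n(γ_{m,d}) = {x^{d−k} y^{n+k−d}}_{k=1}^{d} for n ≥ d (Proposition 3.1, case (iii), spanning part): Let m = 1 or m = 2, assume m ≤ d and n ≥ d. Then for every F ∈ R with totalDegree F ≤ n, there exist coefficients c : Fin d → ℝ and a polynomial Q ∈ R with totalDegree Q < n such that F − (∑_{k : Fin d} c k • (x^(d − 1 − k) * y^(n + 1 + k − d)) + Q) ∈ I_m. (Here the exponents d−1−k ∈ {0,…,d−1} and n+1+k−d ∈ {n+1−d,…,n} correspond to the monomials x^{d−k} y^{n+k−d}, k = 1,…,d, of the paper.) -/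
open MvPolynomial

private lemma totalDegree_aeval_X_le (p : Polynomial ℝ) :
    (Polynomial.aeval (MvPolynomial.X 0 : MvPolynomial (Fin 2) ℝ) p).totalDegree ≤
      p.natDegree := by
  rw [Polynomial.aeval_eq_sum_range]
  refine (MvPolynomial.totalDegree_finset_sum _ _).trans (Finset.sup_le fun i hi => ?_)
  refine (MvPolynomial.totalDegree_smul_le _ _).trans ?_
  refine (MvPolynomial.totalDegree_pow _ _).trans ?_
  rw [MvPolynomial.totalDegree_X, mul_one]
  exact Nat.lt_succ_iff.mp (Finset.mem_range.mp hi)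

/-- Spanning property of the monomial basis
`ℬ_n(γ_{m,d}) = {x^{d−k} y^{n+k−d}}_{k=1}^{d}` for `n ≥ d`. -/
theorem monomial_basis_spanning
    (d : ℕ) (φ : Polynomial ℝ) (hφ : φ.degree = d)
    (m : ℕ) (hm : m = 1 ∨ m = 2) (hmd : m ≤ d) (n : ℕ) (hn : d ≤ n)
    (F : MvPolynomial (Fin 2) ℝ) (hF : F.totalDegree ≤ n) :
    ∃ (c : Fin d → ℝ) (Q : MvPolynomial (Fin 2) ℝ), Q.totalDegree < n ∧
      F - (∑ k : Fin d, c k •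
          ((MvPolynomial.X 0 : MvPolynomial (Fin 2) ℝ) ^ (d - 1 - (k : ℕ)) *
            (MvPolynomial.X 1 : MvPolynomial (Fin 2) ℝ) ^ (n + 1 + (k : ℕ) - d)) + Q) ∈
        Ideal.span {(MvPolynomial.X 1 : MvPolynomial (Fin 2) ℝ) ^ m -
          Polynomial.aeval (MvPolynomial.X 0 : MvPolynomial (Fin 2) ℝ) φ} := by
  have hm1 : 1 ≤ m := by omega
  have hd1 : 1 ≤ d := le_trans hm1 hmd
  have hn1 : 1 ≤ n := le_trans hd1 hn
  set x : MvPolynomial (Fin 2) ℝ := MvPolynomial.X 0 with hx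
  set y : MvPolynomial (Fin 2) ℝ := MvPolynomial.X 1 with hy
  set g : MvPolynomial (Fin 2) ℝ := y ^ m - Polynomial.aeval x φ with hg
  have hφ0 : φ ≠ 0 := fun h => by simp [h] at hφ
  have hnd : φ.natDegree = d := Polynomial.natDegree_eq_of_degree_eq_some hφ
  set σ : ℝ := φ.leadingCoeff with hσdef
  have hσ : σ ≠ 0 := Polynomial.leadingCoeff_ne_zero.mpr hφ0
  set ψ : Polynomial ℝ := φ.eraseLead with hψ
  have hψd : ψ.natDegree ≤ d - 1 := hnd ▸ Polynomial.eraseLead_natDegree_le φ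
  have hΦ : (Polynomial.aeval x φ : MvPolynomial (Fin 2) ℝ) =
      Polynomial.aeval x ψ + MvPolynomial.C σ * x ^ d := by
    conv_lhs => rw [← Polynomial.eraseLead_add_C_mul_X_pow φ]
    rw [map_add, map_mul, Polynomial.aeval_C, map_pow, Polynomial.aeval_X, hnd]
    rfl
  have hdx : x.totalDegree = 1 := MvPolynomial.totalDegree_X 0
  have hdy : y.totalDegree = 1 := MvPolynomial.totalDegree_X 1
  have hpow : ∀ a c : ℕ, (x ^ a * y ^ c).totalDegree ≤ a + c := by
    intro a c
    calc (x ^ a * y ^ c).totalDegree ≤ (x ^ a).totalDegree + (y ^ c).totalDegree :=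
          MvPolynomial.totalDegree_mul _ _
      _ ≤ a * x.totalDegree + c * y.totalDegree :=
          add_le_add (MvPolynomial.totalDegree_pow _ _) (MvPolynomial.totalDegree_pow _ _)
      _ = a + c := by rw [hdx, hdy, mul_one, mul_one]
  set b : Fin d → MvPolynomial (Fin 2) ℝ :=
    fun k => x ^ (d - 1 - (k : ℕ)) * y ^ (n + 1 + (k : ℕ) - d) with hb
  set T : Submodule ℝ (MvPolynomial (Fin 2) ℝ) :=
    (Submodule.span ℝ (Set.range b) ⊔ restrictTotalDegree (Fin 2) ℝ (n - 1)) ⊔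
      (Ideal.span {g}).restrictScalars ℝ with hT
  have hTb : Submodule.span ℝ (Set.range b) ≤ T := le_sup_left.trans le_sup_left
  have hTr : restrictTotalDegree (Fin 2) ℝ (n - 1) ≤ T := le_sup_right.trans le_sup_left
  have hTi : (Ideal.span {g}).restrictScalars ℝ ≤ T := le_sup_right
  -- key reduction lemma
  have key : ∀ a : ℕ, ∀ c : ℕ, a + c ≤ n → x ^ a * y ^ c ∈ T := by
    intro a
    induction a using Nat.strong_induction_on with
    | _ a IH =>
      intro c hac
      rcases lt_or_eq_of_le hac with hlt | heq
      · exact hTr ((mem_restrictTotalDegree _ _ _).mpr ((hpow a c).trans (by omega)))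
      · rcases lt_or_ge a d with had | hda
        · -- basis monomial
          apply hTb
          apply Submodule.subset_span
          refine ⟨⟨d - 1 - a, by omega⟩, ?_⟩
          simp only [hb]
          congr 1 <;> congr 1 <;> omega
        · -- reduce using the relation
          have had : a - d + d = a := Nat.sub_add_cancel hda
          have hid : σ • (x ^ (a - d + d) * y ^ c) =
              x ^ (a - d) * y ^ (c + m) - x ^ (a - d) * y ^ c * Polynomial.aeval x ψ
                - x ^ (a - d) * y ^ c * g := by
            rw [hg, hΦ, MvPolynomial.smul_eq_C_mul, pow_add x (a - d) d, pow_add y c m]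
            ring
          rw [had] at hid
          have h1 : x ^ (a - d) * y ^ (c + m) ∈ T :=
            IH (a - d) (by omega) (c + m) (by omega)
          have h2 : x ^ (a - d) * y ^ c * Polynomial.aeval x ψ ∈ T := by
            apply hTr
            rw [mem_restrictTotalDegree]
            refine (MvPolynomial.totalDegree_mul _ _).trans ?_
            have hav : ((Polynomial.aeval x ψ : MvPolynomial (Fin 2) ℝ)).totalDegree ≤
                ψ.natDegree := totalDegree_aeval_X_le ψ
            have h4 := hpow (a - d) c
            omega
          have h3 : x ^ (a - d) * y ^ c * g ∈ T := by
            apply hTi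
            exact Ideal.mul_mem_left _ _ (Ideal.subset_span rfl)
          have hrw : x ^ a * y ^ c = σ⁻¹ • (σ • (x ^ a * y ^ c)) := by
            rw [smul_smul, inv_mul_cancel₀ hσ, one_smul]
          rw [hrw, hid]
          exact T.smul_mem _ (sub_mem (sub_mem h1 h2) h3)
  -- F ∈ T
  have hFT : F ∈ T := by
    rw [← MvPolynomial.support_sum_monomial_coeff F]
    refine Submodule.sum_mem _ fun s hs => ?_
    have hmon : (MvPolynomial.monomial s (MvPolynomial.coeff s F) : MvPolynomial (Fin 2) ℝ) =
        MvPolynomial.coeff s F • (x ^ (s 0) * y ^ (s 1)) := by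
      rw [MvPolynomial.monomial_eq, Finsupp.prod_fintype _ _ (fun i => pow_zero _),
        Fin.prod_univ_two, MvPolynomial.smul_eq_C_mul]
    have hsn : s 0 + s 1 ≤ n := by
      have hns := MvPolynomial.le_totalDegree hs
      rw [Finsupp.sum_fintype _ _ (fun i => rfl), Fin.sum_univ_two] at hns
      omega
    rw [hmon]
    exact T.smul_mem _ (key _ _ hsn)
  -- extract the decomposition
  rw [hT] at hFT
  rcases Submodule.mem_sup.mp hFT with ⟨u, hu, w, hw, huw⟩
  rcases Submodule.mem_sup.mp hu with ⟨s, hsb, q, hq, hsq⟩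
  rcases (Submodule.mem_span_range_iff_exists_fun ℝ).mp hsb with ⟨c, hc⟩
  refine ⟨c, q, ?_, ?_⟩
  · have := (mem_restrictTotalDegree _ _ _).mp hq
    omega
  · show F - (∑ k : Fin d, c k • b k + q) ∈ Ideal.span {g}
    rw [hc]
    have hfw : F - (s + q) = w := by rw [hsq, ← huw]; ring
    rw [hfw]
    exact hw
end

section
/- Linear independence of the monomial basis ℬ_n(γ_{m,d}) = {x^{d−k} y^{n+k−d}}_{k=1}^{d} modulo lower-degree polynomials, for n ≥ d (Proposition 3.1, case (iii), independence part): Let m = 1 or m = 2, assume m ≤ d and n ≥ d. If c : Fin d → ℝ and Q ∈ R satisfy totalDegree Q < n and (∑_{k : Fin d} c k • (x^(d − 1 − k) * y^(n + 1 + k − d))) − Q ∈ I_m, then c k = 0 for all k. -/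
noncomputable section MBIaux
open Polynomial HahnSeries

abbrev MBIK : Type := LaurentSeries ℝ

noncomputable def mbiX : MBIK := HahnSeries.single (-1 : ℤ) 1

lemma mbiX_pow (e : ℕ) : mbiX ^ e = HahnSeries.single (-(e : ℤ)) (1 : ℝ) := by
  rw [mbiX, HahnSeries.single_pow]
  simp

lemma mbiX_ne : mbiX ≠ 0 := by
  rw [mbiX]
  exact HahnSeries.single_ne_zero one_ne_zero

lemma mbiX_pow_ne (e : ℕ) : mbiX ^ e ≠ 0 := pow_ne_zero _ mbiX_ne

lemma mbiX_pow_order (e : ℕ) : (mbiX ^ e).order = -(e : ℤ) := by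
  rw [mbiX_pow]
  exact HahnSeries.order_single one_ne_zero

lemma aeval_mbiX_coeff (p : Polynomial ℝ) (e : ℤ) :
    (Polynomial.aeval mbiX p : MBIK).coeff e = if 0 ≤ -e then p.coeff (-e).toNat else 0 := by
  induction p using Polynomial.induction_on' with
  | add p q hp hq =>
      simp only [map_add, HahnSeries.coeff_add, hp, hq, Polynomial.coeff_add]
      split_ifs <;> simp
  | monomial nu a =>
      rw [Polynomial.aeval_monomial, mbiX_pow]
      have h1 : (algebraMap ℝ MBIK) a = HahnSeries.single (0 : ℤ) a := by
        rw [HahnSeries.algebraMap_apply', PowerSeries.algebraMap_apply,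
          Algebra.algebraMap_self_apply, HahnSeries.ofPowerSeries_C, HahnSeries.C_apply]
      rw [h1, HahnSeries.single_mul_single, zero_add, HahnSeries.coeff_single,
        Polynomial.coeff_monomial]
      split_ifs <;> first | (exfalso; omega) | simp

lemma aeval_mbiX_coeff_one (p : Polynomial ℝ) :
    (Polynomial.aeval mbiX p : MBIK).coeff 1 = 0 := by
  rw [aeval_mbiX_coeff]
  norm_num

noncomputable def mbiPhi (φ : Polynomial ℝ) : MBIK := Polynomial.aeval mbiX φ

variable {φ : Polynomial ℝ} {d : ℕ}

lemma mbiPhi_coeff (hφ : φ.degree = d) :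
    (mbiPhi φ).coeff (-(d : ℤ)) = φ.leadingCoeff := by
  rw [mbiPhi, aeval_mbiX_coeff]
  have : φ.natDegree = d := Polynomial.natDegree_eq_of_degree_eq_some hφ
  simp [Polynomial.leadingCoeff, this]

lemma mbiPhi_ne (hφ : φ.degree = d) : mbiPhi φ ≠ 0 := by
  intro h
  have h2 := mbiPhi_coeff hφ
  rw [h] at h2
  simp only [HahnSeries.coeff_zero] at h2
  have hφ0 : φ ≠ 0 := fun h0 => by simp [h0] at hφ
  exact (Polynomial.leadingCoeff_ne_zero.mpr hφ0) h2.symm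

lemma mbiPhi_order (hφ : φ.degree = d) : (mbiPhi φ).order = -(d : ℤ) := by
  have hne := mbiPhi_ne hφ
  have hnd : φ.natDegree = d := Polynomial.natDegree_eq_of_degree_eq_some hφ
  refine le_antisymm (HahnSeries.order_le_of_coeff_ne_zero ?_) (le_of_not_gt ?_)
  · rw [mbiPhi_coeff hφ]
    exact Polynomial.leadingCoeff_ne_zero.mpr (fun h0 => by simp [h0] at hφ)
  · intro hlt
    apply mt HahnSeries.coeff_order_eq_zero.mp hne
    rw [mbiPhi, aeval_mbiX_coeff]
    split_ifs with h0
    · apply Polynomial.coeff_eq_zero_of_natDegree_lt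
      rw [hnd]
      have hlt' : (Polynomial.aeval mbiX φ : MBIK).order < -(d : ℤ) := hlt
      omega
    · rfl

lemma mbiPhi_pow_order (hφ : φ.degree = d) (j : ℕ) :
    ((mbiPhi φ) ^ j).order = -((j : ℤ) * (d : ℤ)) := by
  rw [HahnSeries.order_pow, mbiPhi_order hφ, smul_neg, nsmul_eq_mul]

lemma mbiPhi_pow_inv_order (hφ : φ.degree = d) (t : ℕ) :
    (((mbiPhi φ) ^ t)⁻¹).order = (t : ℤ) * (d : ℤ) := by
  have hne : (mbiPhi φ) ^ t ≠ 0 := pow_ne_zero _ (mbiPhi_ne hφ)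
  have h1 : (mbiPhi φ) ^ t * ((mbiPhi φ) ^ t)⁻¹ = 1 := mul_inv_cancel₀ hne
  have h2 := HahnSeries.order_mul hne (inv_ne_zero hne)
  rw [h1, HahnSeries.order_one, mbiPhi_pow_order hφ] at h2
  omega

lemma valA (hφ : φ.degree = d) (e j t : ℕ) (h : t ≤ j) :
    (mbiX ^ e * (mbiPhi φ) ^ j * ((mbiPhi φ) ^ t)⁻¹).coeff 1 = 0 := by
  have h1 : (mbiPhi φ) ^ j = (mbiPhi φ) ^ (j - t) * (mbiPhi φ) ^ t := by
    rw [← _root_.pow_add, Nat.sub_add_cancel h]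
  rw [h1, show mbiX ^ e * ((mbiPhi φ) ^ (j - t) * (mbiPhi φ) ^ t) * ((mbiPhi φ) ^ t)⁻¹
      = mbiX ^ e * (mbiPhi φ) ^ (j - t) * ((mbiPhi φ) ^ t * ((mbiPhi φ) ^ t)⁻¹) by ring,
    mul_inv_cancel₀ (pow_ne_zero _ (mbiPhi_ne hφ)), mul_one]
  rw [mbiPhi, ← map_pow,
    show mbiX ^ e = Polynomial.aeval mbiX ((Polynomial.X : Polynomial ℝ) ^ e) by
      rw [map_pow, Polynomial.aeval_X],
    ← map_mul]
  exact aeval_mbiX_coeff_one _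

lemma valB (hφ : φ.degree = d) (e j t : ℕ)
    (h : (1 : ℤ) < -(e : ℤ) - (j : ℤ) * (d : ℤ) + (t : ℤ) * (d : ℤ)) :
    (mbiX ^ e * (mbiPhi φ) ^ j * ((mbiPhi φ) ^ t)⁻¹).coeff 1 = 0 := by
  have hne1 : mbiX ^ e ≠ 0 := mbiX_pow_ne e
  have hne2 : (mbiPhi φ) ^ j ≠ 0 := pow_ne_zero _ (mbiPhi_ne hφ)
  have hne3 : ((mbiPhi φ) ^ t)⁻¹ ≠ 0 := inv_ne_zero (pow_ne_zero _ (mbiPhi_ne hφ))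
  apply HahnSeries.coeff_eq_zero_of_lt_order
  rw [HahnSeries.order_mul (mul_ne_zero hne1 hne2) hne3,
    HahnSeries.order_mul hne1 hne2, mbiX_pow_order, mbiPhi_pow_order hφ,
    mbiPhi_pow_inv_order hφ]
  omega

lemma valC (hφ : φ.degree = d) (hd : 0 < d) :
    (mbiX ^ (d - 1) * (mbiPhi φ)⁻¹).coeff 1 ≠ 0 := by
  have hne : mbiPhi φ ≠ 0 := mbiPhi_ne hφ
  have h1 : (mbiX ^ (d - 1)).order + ((mbiPhi φ)⁻¹).order = 1 := by
    have h2 : ((mbiPhi φ)⁻¹).order = (d : ℤ) := by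
      have := mbiPhi_pow_inv_order hφ 1
      simpa using this
    rw [mbiX_pow_order, h2]
    omega
  rw [show (1 : ℤ) = (mbiX ^ (d - 1)).order + ((mbiPhi φ)⁻¹).order from h1.symm,
    HahnSeries.coeff_mul_order_add_order]
  apply mul_ne_zero
  · rw [mbiX_pow]
    rw [HahnSeries.leadingCoeff_of_single]
    exact one_ne_zero
  · exact HahnSeries.leadingCoeff_ne_zero.mpr (inv_ne_zero hne)

lemma mbi_algebraMap (a : ℝ) : algebraMap ℝ MBIK a = HahnSeries.single (0 : ℤ) a := by
  rw [HahnSeries.algebraMap_apply', PowerSeries.algebraMap_apply,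
    Algebra.algebraMap_self_apply, HahnSeries.ofPowerSeries_C, HahnSeries.C_apply]

lemma mbi_algebraMap_mul_coeff (a : ℝ) (z : MBIK) :
    (algebraMap ℝ MBIK a * z).coeff 1 = a * z.coeff 1 := by
  rw [mbi_algebraMap, HahnSeries.single_zero_mul_eq_smul, HahnSeries.coeff_smul, smul_eq_mul]

end MBIaux

set_option maxHeartbeats 1600000 in
/-- Linear independence of the monomial basis
`ℬ_n(γ_{m,d}) = {x^{d−k} y^{n+k−d}}_{k=1}^{d}` modulo lower-degree polynomials,
for `n ≥ d`. -/
theorem monomial_basis_independent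
    (d : ℕ) (φ : Polynomial ℝ) (hφ : φ.degree = d)
    (m : ℕ) (hm : m = 1 ∨ m = 2) (hmd : m ≤ d) (n : ℕ) (hn : d ≤ n)
    (c : Fin d → ℝ) (Q : MvPolynomial (Fin 2) ℝ) (hQ : Q.totalDegree < n)
    (hmem : (∑ k : Fin d, c k •
        ((MvPolynomial.X 0 : MvPolynomial (Fin 2) ℝ) ^ (d - 1 - (k : ℕ)) *
          (MvPolynomial.X 1 : MvPolynomial (Fin 2) ℝ) ^ (n + 1 + (k : ℕ) - d))) - Q ∈
      Ideal.span {(MvPolynomial.X 1 : MvPolynomial (Fin 2) ℝ) ^ m -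
        Polynomial.aeval (MvPolynomial.X 0 : MvPolynomial (Fin 2) ℝ) φ}) :
    ∀ k, c k = 0 := by
  classical
  intro k₀
  have hm1 : 0 < m := by rcases hm with h | h <;> omega
  have hd : 0 < d := lt_of_lt_of_le hm1 hmd
  set S : MvPolynomial (Fin 2) ℝ := ∑ k : Fin d, c k •
      ((MvPolynomial.X 0 : MvPolynomial (Fin 2) ℝ) ^ (d - 1 - (k : ℕ)) *
        (MvPolynomial.X 1 : MvPolynomial (Fin 2) ℝ) ^ (n + 1 + (k : ℕ) - d)) with hSdef
  obtain ⟨Pl, hPl⟩ := Ideal.mem_span_singleton'.mp hmem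
  set χ : MvPolynomial (Fin 2) ℝ →ₐ[ℝ] Polynomial MBIK :=
    MvPolynomial.aeval ![Polynomial.C mbiX, Polynomial.X] with hχdef
  set g : Polynomial MBIK := Polynomial.X ^ m - Polynomial.C (mbiPhi φ) with hgdef
  have hgm : g.Monic := Polynomial.monic_X_pow_sub_C _ (by omega)
  have hgdeg : g.degree = (m : ℕ) := Polynomial.degree_X_pow_sub_C hm1 _
  -- basic index arithmetic
  set b₀ : ℕ := n + 1 + (k₀ : ℕ) - d with hb₀def
  have hb₀d : b₀ + d = n + 1 + (k₀ : ℕ) := by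
    have := k₀.isLt
    omega
  set r : ℕ := b₀ % m with hrdef
  set q₀ : ℕ := b₀ / m with hq₀def
  have hb₀mq : m * q₀ + r = b₀ := Nat.div_add_mod b₀ m
  have hrm : r < m := Nat.mod_lt _ hm1
  set W : MBIK := mbiX ^ (k₀ : ℕ) * ((mbiPhi φ) ^ (q₀ + 1))⁻¹ with hWdef
  clear_value S b₀ r q₀ W
  -- χ on generators
  have hχ0 : χ (MvPolynomial.X 0) = Polynomial.C mbiX := by
    rw [hχdef, MvPolynomial.aeval_X, Matrix.cons_val_zero]
  have hχ1 : χ (MvPolynomial.X 1) = Polynomial.X := by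
    rw [hχdef, MvPolynomial.aeval_X, Matrix.cons_val_one, Matrix.cons_val_zero]
  have hχΦ : χ (Polynomial.aeval (MvPolynomial.X 0) φ) = Polynomial.C (mbiPhi φ) := by
    rw [← Polynomial.aeval_algHom_apply χ (MvPolynomial.X 0) φ, hχ0]
    have h1 := Polynomial.aeval_algHom_apply (Polynomial.CAlgHom (R := ℝ) (A := MBIK)) mbiX φ
    simpa [Polynomial.CAlgHom, mbiPhi] using h1
  have hχg : χ ((MvPolynomial.X 1 : MvPolynomial (Fin 2) ℝ) ^ m -
      Polynomial.aeval (MvPolynomial.X 0) φ) = g := by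
    rw [map_sub, map_pow, hχ1, hχΦ, hgdef]
  -- the two sides agree after reduction mod g
  have hmodeq : (χ S) %ₘ g = (χ Q) %ₘ g := by
    have h4 : χ S - χ Q = χ Pl * g := by
      have h4a : χ (S - Q) = χ Pl * g := by rw [← hPl, map_mul, hχg]
      rw [← h4a, map_sub]
    have h5 : (χ S - χ Q) %ₘ g = 0 := by
      rw [Polynomial.modByMonic_eq_zero_iff_dvd hgm, h4]
      exact dvd_mul_left g (χ Pl)
    rw [Polynomial.sub_modByMonic] at h5
    exact sub_eq_zero.mp h5
  -- reduction of a single monomial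
  have hmod1 : ∀ (u : MBIK) (b : ℕ), (Polynomial.C u * Polynomial.X ^ b) %ₘ g
      = Polynomial.C (u * (mbiPhi φ) ^ (b / m)) * Polynomial.X ^ (b % m) := by
    intro u b
    have h1 : (Polynomial.X : Polynomial MBIK) ^ b
        = (Polynomial.X ^ m) ^ (b / m) * Polynomial.X ^ (b % m) := by
      rw [← pow_mul, ← pow_add]
      congr 1
      exact (Nat.div_add_mod b m).symm
    have h2 : g ∣ ((Polynomial.X ^ m) ^ (b / m)
        - (Polynomial.C (mbiPhi φ)) ^ (b / m)) := by
      rw [hgdef]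
      exact sub_dvd_pow_sub_pow (Polynomial.X ^ m) (Polynomial.C (mbiPhi φ)) (b / m)
    have h3 : Polynomial.C u * Polynomial.X ^ b
        - Polynomial.C (u * (mbiPhi φ) ^ (b / m)) * Polynomial.X ^ (b % m)
        = (Polynomial.C u * Polynomial.X ^ (b % m)) *
          ((Polynomial.X ^ m) ^ (b / m) - (Polynomial.C (mbiPhi φ)) ^ (b / m)) := by
      rw [h1, map_mul, Polynomial.C_pow]
      ring
    have hdvd : g ∣ (Polynomial.C u * Polynomial.X ^ b
        - Polynomial.C (u * (mbiPhi φ) ^ (b / m)) * Polynomial.X ^ (b % m)) := by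
      rw [h3]
      exact dvd_mul_of_dvd_right h2 (Polynomial.C u * Polynomial.X ^ (b % m))
    have heq : (Polynomial.C u * Polynomial.X ^ b) %ₘ g
        = (Polynomial.C (u * (mbiPhi φ) ^ (b / m)) * Polynomial.X ^ (b % m)) %ₘ g := by
      have h0 := (Polynomial.modByMonic_eq_zero_iff_dvd hgm).mpr hdvd
      rw [Polynomial.sub_modByMonic] at h0
      exact sub_eq_zero.mp h0
    rw [heq, (Polynomial.modByMonic_eq_self_iff hgm).mpr]
    refine lt_of_le_of_lt (Polynomial.degree_C_mul_X_pow_le _ _) ?_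
    rw [hgdeg]
    exact_mod_cast Nat.mod_lt _ hm1
  -- coefficient extraction for a single monomial
  have hterm : ∀ (u : MBIK) (b : ℕ),
      ((((Polynomial.C u * Polynomial.X ^ b) %ₘ g).coeff r) * W).coeff 1
      = if b % m = r then ((u * (mbiPhi φ) ^ (b / m)) * W).coeff 1 else 0 := by
    intro u b
    rw [hmod1, Polynomial.coeff_C_mul, Polynomial.coeff_X_pow]
    by_cases h1 : b % m = r
    · rw [if_pos h1, if_pos h1.symm, mul_one]
    · rw [if_neg h1, if_neg (fun h => h1 h.symm), mul_zero, zero_mul, HahnSeries.coeff_zero]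
  -- sums pass through
  have hmodsum : ∀ {ι : Type} (s : Finset ι) (f : ι → Polynomial MBIK),
      ((((∑ i ∈ s, f i) %ₘ g).coeff r) * W).coeff 1
      = ∑ i ∈ s, ((((f i) %ₘ g).coeff r) * W).coeff 1 := by
    intro ι s f
    induction s using Finset.cons_induction with
    | empty => simp [Polynomial.zero_modByMonic]
    | cons a s ha ih =>
        rw [Finset.sum_cons, Polynomial.add_modByMonic, Polynomial.coeff_add, add_mul,
          HahnSeries.coeff_add, ih, Finset.sum_cons]
  -- evaluate the S side
  have hχS : χ S = ∑ k : Fin d,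
      Polynomial.C (algebraMap ℝ MBIK (c k) * mbiX ^ (d - 1 - (k : ℕ))) *
        Polynomial.X ^ (n + 1 + (k : ℕ) - d) := by
    rw [hSdef, map_sum]
    refine Finset.sum_congr rfl fun k _ => ?_
    rw [map_smul, map_mul, map_pow, map_pow, hχ0, hχ1, ← Polynomial.C_pow,
      Algebra.smul_def, Polynomial.algebraMap_apply, ← mul_assoc, ← map_mul]
  have hA : (mbiX ^ (d - 1) * (mbiPhi φ)⁻¹).coeff 1 ≠ 0 := valC hφ hd
  have hLHS : (((χ S %ₘ g).coeff r) * W).coeff 1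
      = c k₀ * ((mbiX ^ (d - 1) * (mbiPhi φ)⁻¹).coeff 1) := by
    rw [hχS, hmodsum]
    rw [Finset.sum_eq_single k₀]
    · rw [hterm, ← hb₀def, if_pos hrdef.symm]
      have hasm : algebraMap ℝ MBIK (c k₀) * mbiX ^ (d - 1 - (k₀ : ℕ)) *
            (mbiPhi φ) ^ (b₀ / m) * W
          = algebraMap ℝ MBIK (c k₀) * (mbiX ^ (d - 1) * (mbiPhi φ)⁻¹) := by
        rw [hWdef]
        have h9 : mbiX ^ (d - 1 - (k₀ : ℕ)) * mbiX ^ (k₀ : ℕ) = mbiX ^ (d - 1) := by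
          rw [← pow_add]
          congr 1
          have := k₀.isLt
          omega
        have h10 : (mbiPhi φ) ^ (b₀ / m) * ((mbiPhi φ) ^ (q₀ + 1))⁻¹ = (mbiPhi φ)⁻¹ := by
          rw [← hq₀def, pow_succ, mul_inv, ← mul_assoc,
            mul_inv_cancel₀ (pow_ne_zero _ (mbiPhi_ne hφ)), one_mul]
        calc algebraMap ℝ MBIK (c k₀) * mbiX ^ (d - 1 - (k₀ : ℕ)) *
              (mbiPhi φ) ^ (b₀ / m) * (mbiX ^ (k₀ : ℕ) * ((mbiPhi φ) ^ (q₀ + 1))⁻¹)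
            = algebraMap ℝ MBIK (c k₀) * ((mbiX ^ (d - 1 - (k₀ : ℕ)) * mbiX ^ (k₀ : ℕ)) *
              ((mbiPhi φ) ^ (b₀ / m) * ((mbiPhi φ) ^ (q₀ + 1))⁻¹)) := by ring
          _ = _ := by rw [h9, h10]
      rw [hasm, mbi_algebraMap_mul_coeff]
    · intro k _ hkne
      rw [hterm]
      set bk : ℕ := n + 1 + (k : ℕ) - d with hbkdef
      by_cases hcl : bk % m = r
      · rw [if_pos hcl]
        set qk : ℕ := bk / m with hqkdef
        have hbkd : bk + d = n + 1 + (k : ℕ) := by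
          have := k.isLt
          omega
        have hbkmq : m * qk + r = bk := by
          rw [hqkdef, ← hcl]
          exact Nat.div_add_mod bk m
        clear_value qk
        have hasm2 : algebraMap ℝ MBIK (c k) * mbiX ^ (d - 1 - (k : ℕ)) *
              (mbiPhi φ) ^ qk * W
            = algebraMap ℝ MBIK (c k) *
              (mbiX ^ ((d - 1 - (k : ℕ)) + (k₀ : ℕ)) * (mbiPhi φ) ^ qk *
                (((mbiPhi φ) ^ (q₀ + 1))⁻¹)) := by
          rw [hWdef, pow_add]
          ring
        rw [hasm2, mbi_algebraMap_mul_coeff]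
        have hz : (mbiX ^ ((d - 1 - (k : ℕ)) + (k₀ : ℕ)) * (mbiPhi φ) ^ qk *
            (((mbiPhi φ) ^ (q₀ + 1))⁻¹)).coeff 1 = 0 := by
          by_cases hq : q₀ + 1 ≤ qk
          · exact valA hφ _ _ _ hq
          · have hqlt : qk < q₀ := by
              by_contra hge
              have hq2 : qk = q₀ := by omega
              have hbb : bk = b₀ := by rw [← hbkmq, hq2, hb₀mq]
              have hkk : (k : ℕ) = (k₀ : ℕ) := by omega
              exact hkne (Fin.ext hkk)
            apply valB hφ
            have hkd : (d - 1 - (k : ℕ)) + (k₀ : ℕ) + 2 ≤ 2 * d := by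
              have := k.isLt
              have := k₀.isLt
              omega
            have hkdZ : (((d - 1 - (k : ℕ)) + (k₀ : ℕ) : ℕ) : ℤ) + 2 ≤ 2 * (d : ℤ) := by
              exact_mod_cast hkd
            have hqZ : ((qk : ℤ) + 2) * (d : ℤ) ≤ ((q₀ : ℤ) + 1) * (d : ℤ) := by
              apply mul_le_mul_of_nonneg_right
              · have : (qk : ℤ) + 1 ≤ (q₀ : ℤ) := by exact_mod_cast hqlt
                linarith
              · positivity
            push_cast at hkdZ hqZ ⊢
            nlinarith [hqZ, hkdZ]
        rw [hz, mul_zero]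
      · rw [if_neg hcl]
    · intro hne
      exact absurd (Finset.mem_univ k₀) hne
  -- evaluate the Q side
  have hRHS : (((χ Q %ₘ g).coeff r) * W).coeff 1 = 0 := by
    conv_lhs => rw [← MvPolynomial.support_sum_monomial_coeff Q]
    rw [map_sum, hmodsum]
    apply Finset.sum_eq_zero
    intro v hv
    have hvsum : v 0 + v 1 + 1 ≤ n := by
      have h1 := MvPolynomial.le_totalDegree hv
      have h2 : (v.sum fun _ e => e) = v 0 + v 1 := by
        rw [Finsupp.sum_fintype _ _ (fun i => rfl), Fin.sum_univ_two]
      omega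
    have hχm : χ (MvPolynomial.monomial v (MvPolynomial.coeff v Q))
        = Polynomial.C (algebraMap ℝ MBIK (MvPolynomial.coeff v Q) * mbiX ^ (v 0)) *
          Polynomial.X ^ (v 1) := by
      rw [hχdef, MvPolynomial.aeval_monomial,
        Finsupp.prod_fintype _ _ (fun i => pow_zero _), Fin.prod_univ_two,
        Matrix.cons_val_zero, Matrix.cons_val_one, Matrix.cons_val_zero,
        ← Polynomial.C_pow, Polynomial.algebraMap_apply, ← mul_assoc, ← map_mul]
    rw [hχm, hterm]
    by_cases hcl : (v 1) % m = r
    · rw [if_pos hcl]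
      set qv : ℕ := (v 1) / m with hqvdef
      have hvmq : m * qv + r = v 1 := by
        rw [hqvdef, ← hcl]
        exact Nat.div_add_mod _ m
      clear_value qv
      have hasm3 : algebraMap ℝ MBIK (MvPolynomial.coeff v Q) * mbiX ^ (v 0) *
            (mbiPhi φ) ^ qv * W
          = algebraMap ℝ MBIK (MvPolynomial.coeff v Q) *
            (mbiX ^ ((v 0) + (k₀ : ℕ)) * (mbiPhi φ) ^ qv *
              (((mbiPhi φ) ^ (q₀ + 1))⁻¹)) := by
        rw [hWdef, pow_add]
        ring
      rw [hasm3, mbi_algebraMap_mul_coeff]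
      have hz : (mbiX ^ ((v 0) + (k₀ : ℕ)) * (mbiPhi φ) ^ qv *
          (((mbiPhi φ) ^ (q₀ + 1))⁻¹)).coeff 1 = 0 := by
        by_cases hq : q₀ + 1 ≤ qv
        · exact valA hφ _ _ _ hq
        · have hqle : qv ≤ q₀ := by omega
          apply valB hφ
          have hqZ : (m : ℤ) * ((q₀ : ℤ) - (qv : ℤ)) ≤ (d : ℤ) * ((q₀ : ℤ) - (qv : ℤ)) := by
            apply mul_le_mul_of_nonneg_right
            · exact_mod_cast hmd
            · have : (qv : ℤ) ≤ (q₀ : ℤ) := by exact_mod_cast hqle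
              linarith
          have hc1 : ((v 0 : ℕ) : ℤ) + ((v 1 : ℕ) : ℤ) + 1 ≤ (n : ℤ) := by
            exact_mod_cast hvsum
          have hc2 : (m : ℤ) * (qv : ℤ) + (r : ℤ) = ((v 1 : ℕ) : ℤ) := by
            exact_mod_cast hvmq
          have hc3 : (m : ℤ) * (q₀ : ℤ) + (r : ℤ) = (b₀ : ℤ) := by
            exact_mod_cast hb₀mq
          have hc4 : (b₀ : ℤ) + (d : ℤ) = (n : ℤ) + 1 + ((k₀ : ℕ) : ℤ) := by
            exact_mod_cast hb₀d
          push_cast at hqZ hc1 hc2 hc3 hc4 ⊢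
          nlinarith [hqZ, hc1, hc2, hc3, hc4]
      rw [hz, mul_zero]
    · rw [if_neg hcl]
  -- conclude
  have hmain : c k₀ * ((mbiX ^ (d - 1) * (mbiPhi φ)⁻¹).coeff 1) = 0 := by
    rw [← hLHS, hmodeq, hRHS]
  rcases mul_eq_zero.mp hmain with h | h
  · exact h
  · exact absurd h hA
end

section
/- Linear independence of the degree-n monomials on the curve in the low-degree regime (Proposition 3.1, case (i)): Let m = 1 or m = 2, let d ≥ 1, and suppose n + 1 ≤ max d m. If c : Fin (n+1) → ℝ and Q ∈ R satisfy (Q = 0 or totalDegree Q < n) and (∑_{k : Fin (n+1)} c k • (x^(n − k) * y^(k : ℕ))) − Q ∈ I_m, then c k = 0 for all k. (Thus the monomials x^{n−k} y^k, k = 0,…,n, are linearly independent modulo I_m and polynomials of total degree less than n.) -/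
open Polynomial in
/-- If finitely many real polynomials with pairwise distinct degrees (among the
nonzero ones) sum to zero, then they are all zero. -/
lemma sum_eq_zero_of_distinct_degrees {ι : Type*} (s : Finset ι) (g : ι → Polynomial ℝ)
    (h : ∀ i ∈ s, ∀ j ∈ s, g i ≠ 0 → g j ≠ 0 → (g i).degree = (g j).degree → i = j)
    (hsum : ∑ i ∈ s, g i = 0) : ∀ i ∈ s, g i = 0 := by
  classical
  by_contra hc
  push_neg at hc
  obtain ⟨i, hi, hgi⟩ := hc
  have hne : (s.filter (fun j => g j ≠ 0)).Nonempty := ⟨i, by simp [hi, hgi]⟩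
  obtain ⟨j₀, hj₀T, hmax⟩ := (s.filter (fun j => g j ≠ 0)).exists_max_image
    (fun j => (g j).degree) hne
  have hj₀s : j₀ ∈ s := (Finset.mem_filter.mp hj₀T).1
  have hgj₀ : g j₀ ≠ 0 := (Finset.mem_filter.mp hj₀T).2
  have hbot : (⊥ : WithBot ℕ) < (g j₀).degree := by
    rwa [bot_lt_iff_ne_bot, Ne, degree_eq_bot]
  have key : g j₀ = -∑ j ∈ s.erase j₀, g j := by
    have h2 := Finset.add_sum_erase s g hj₀s
    rw [hsum] at h2
    linear_combination h2
  have hlt : (∑ j ∈ s.erase j₀, g j).degree < (g j₀).degree := by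
    refine lt_of_le_of_lt (degree_sum_le _ _) ?_
    rw [Finset.sup_lt_iff hbot]
    intro j hj
    by_cases hgj : g j = 0
    · simpa [hgj] using hbot
    · have hjs := Finset.mem_erase.mp hj
      refine lt_of_le_of_ne (hmax j (Finset.mem_filter.mpr ⟨hjs.2, hgj⟩)) ?_
      intro hEq
      exact hjs.1 (h j hjs.2 j₀ hj₀s hgj hgj₀ hEq)
  rw [key, degree_neg] at hlt
  exact absurd rfl (ne_of_gt hlt)


lemma key_cc (m d n k k' : ℕ) (hm : m = 1 ∨ m = 2)
    (hcase : n + 1 ≤ d ∨ (m = 2 ∧ d = 1 ∧ n = 1))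
    (hk : k ≤ n) (hk' : k' ≤ n) (hmod : k % m = k' % m) (hlt : k < k')
    (heq : (n - k) + (k / m) * d = (n - k') + (k' / m) * d) : False := by
  rcases hcase with hA | ⟨hm2, hd1, hn1⟩
  · have h1 : k / m < k' / m := by rcases hm with rfl | rfl <;> omega
    have h2 : (k / m) * d + d ≤ (k' / m) * d := by
      have := Nat.mul_le_mul_right d (Nat.succ_le_of_lt h1)
      simpa [Nat.succ_mul] using this
    obtain ⟨u, hu⟩ : ∃ u, (k / m) * d = u := ⟨_, rfl⟩
    obtain ⟨v, hv⟩ : ∃ v, (k' / m) * d = v := ⟨_, rfl⟩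
    rw [hu, hv] at heq h2
    omega
  · subst hm2 hd1 hn1; omega

lemma key_qq (m d n b b' a a' : ℕ) (hm : m = 1 ∨ m = 2)
    (hcase : n + 1 ≤ d ∨ (m = 2 ∧ d = 1 ∧ n = 1))
    (hb : a + b < n) (hb' : a' + b' < n) (hmod : b % m = b' % m) (hlt : b < b')
    (heq : a + (b / m) * d = a' + (b' / m) * d) : False := by
  rcases hcase with hA | ⟨hm2, hd1, hn1⟩
  · have h1 : b / m < b' / m := by rcases hm with rfl | rfl <;> omega
    have h2 : (b / m) * d + d ≤ (b' / m) * d := by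
      have := Nat.mul_le_mul_right d (Nat.succ_le_of_lt h1)
      simpa [Nat.succ_mul] using this
    obtain ⟨u, hu⟩ : ∃ u, (b / m) * d = u := ⟨_, rfl⟩
    obtain ⟨v, hv⟩ : ∃ v, (b' / m) * d = v := ⟨_, rfl⟩
    rw [hu, hv] at heq h2
    omega
  · subst hm2 hd1 hn1; omega

lemma key_cq (m d n k b a : ℕ) (hm : m = 1 ∨ m = 2)
    (hcase : n + 1 ≤ d ∨ (m = 2 ∧ d = 1 ∧ n = 1))
    (hk : k ≤ n) (hab : a + b < n) (hmod : k % m = b % m)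
    (heq : (n - k) + (k / m) * d = a + (b / m) * d) : False := by
  rcases hcase with hA | ⟨hm2, hd1, hn1⟩
  · rcases Nat.lt_trichotomy (k / m) (b / m) with h1 | h1 | h1
    · have h2 : (k / m) * d + d ≤ (b / m) * d := by
        have := Nat.mul_le_mul_right d (Nat.succ_le_of_lt h1)
        simpa [Nat.succ_mul] using this
      obtain ⟨u, hu⟩ : ∃ u, (k / m) * d = u := ⟨_, rfl⟩
      obtain ⟨v, hv⟩ : ∃ v, (b / m) * d = v := ⟨_, rfl⟩
      rw [hu, hv] at heq h2
      omega
    · have hkb : k = b := by rcases hm with rfl | rfl <;> omega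
      subst hkb
      obtain ⟨u, hu⟩ : ∃ u, (k / m) * d = u := ⟨_, rfl⟩
      rw [hu] at heq
      omega
    · have h2 : (b / m) * d + d ≤ (k / m) * d := by
        have := Nat.mul_le_mul_right d (Nat.succ_le_of_lt h1)
        simpa [Nat.succ_mul] using this
      obtain ⟨u, hu⟩ : ∃ u, (k / m) * d = u := ⟨_, rfl⟩
      obtain ⟨v, hv⟩ : ∃ v, (b / m) * d = v := ⟨_, rfl⟩
      rw [hu, hv] at heq h2
      omega
  · subst hm2 hd1 hn1; omega


noncomputable def θR : MvPolynomial (Fin 2) ℝ →ₐ[ℝ] Polynomial (Polynomial ℝ) :=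
  MvPolynomial.aeval ![Polynomial.C Polynomial.X, Polynomial.X]

lemma θR_X0 : θR (MvPolynomial.X 0) = Polynomial.C Polynomial.X := by
  simp [θR]

lemma θR_X1 : θR (MvPolynomial.X 1) = Polynomial.X := by
  simp [θR]

open Polynomial in
lemma red_dvd (φ : Polynomial ℝ) (m k : ℕ) :
    (X ^ m - C φ : (Polynomial ℝ)[X]) ∣ X ^ k - C (φ ^ (k / m)) * X ^ (k % m) := by
  have h1 : (X : (Polynomial ℝ)[X]) ^ k = ((X ^ m) ^ (k / m)) * X ^ (k % m) := by
    rw [← pow_mul, ← pow_add, Nat.div_add_mod]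
  rw [h1, map_pow, ← sub_mul]
  exact (sub_dvd_pow_sub_pow _ _ _).mul_right _

lemma usum_eq (u : Fin 2 →₀ ℕ) : (u.sum fun _ e => e) = u 0 + u 1 := by
  rw [Finsupp.sum_fintype]
  · exact Fin.sum_univ_two _
  · simp

open Polynomial in
lemma θR_coeff_repr (Q : MvPolynomial (Fin 2) ℝ) (b : ℕ) :
    (θR Q).coeff b = ∑ u ∈ Q.support,
      (if b = u 1 then C (MvPolynomial.coeff u Q) * X ^ (u 0) else 0) := by
  conv_lhs => rw [← Q.support_sum_monomial_coeff]
  rw [map_sum, Polynomial.finset_sum_coeff]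
  refine Finset.sum_congr rfl fun u hu => ?_
  rw [show θR (MvPolynomial.monomial u (MvPolynomial.coeff u Q)) =
      Polynomial.C (Polynomial.C (MvPolynomial.coeff u Q)) *
        ((Polynomial.C Polynomial.X) ^ (u 0) * Polynomial.X ^ (u 1)) from ?_]
  · rw [← Polynomial.C_pow, coeff_C_mul, coeff_C_mul, coeff_X_pow]
    split <;> simp
  · rw [θR, MvPolynomial.aeval_monomial, Finsupp.prod_pow, Fin.prod_univ_two]
    simp only [Matrix.cons_val_zero, Matrix.cons_val_one, Matrix.head_cons]
    rw [Polynomial.algebraMap_apply, Polynomial.algebraMap_eq]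

open Polynomial in
lemma θR_coeff_bound (Q : MvPolynomial (Fin 2) ℝ) (b : ℕ) (h : (θR Q).coeff b ≠ 0) :
    ((θR Q).coeff b).natDegree + b ≤ Q.totalDegree := by
  have hb_le : b ≤ Q.totalDegree := by
    by_contra hb
    push_neg at hb
    apply h
    rw [θR_coeff_repr]
    refine Finset.sum_eq_zero fun u hu => ?_
    rw [if_neg]
    intro hbu
    have h1 := MvPolynomial.le_totalDegree hu
    rw [usum_eq] at h1
    omega
  have hdeg : ((θR Q).coeff b).natDegree ≤ Q.totalDegree - b := by
    rw [θR_coeff_repr]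
    refine Polynomial.natDegree_sum_le_of_forall_le _ _ fun u hu => ?_
    split
    · next hbu =>
      refine le_trans (Polynomial.natDegree_mul_le) ?_
      have h1 := MvPolynomial.le_totalDegree hu
      rw [usum_eq] at h1
      simp only [Polynomial.natDegree_C, Polynomial.natDegree_X_pow, zero_add]
      omega
    · simp
  omega

/-- Linear independence of the degree-`n` monomials `x^{n−k} y^k`, `k = 0,…,n`,
on the curve, in the low-degree regime `n + 1 ≤ max d m`. -/
theorem monomial_basis_independent_low_degree
    (d : ℕ) (hd : 1 ≤ d) (φ : Polynomial ℝ) (hφ : φ.degree = d)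
    (m : ℕ) (hm : m = 1 ∨ m = 2) (n : ℕ) (hn : n + 1 ≤ max d m)
    (c : Fin (n + 1) → ℝ) (Q : MvPolynomial (Fin 2) ℝ)
    (hQ : Q = 0 ∨ Q.totalDegree < n)
    (hmem : (∑ k : Fin (n + 1), c k •
        ((MvPolynomial.X 0 : MvPolynomial (Fin 2) ℝ) ^ (n - (k : ℕ)) *
          (MvPolynomial.X 1 : MvPolynomial (Fin 2) ℝ) ^ (k : ℕ))) - Q ∈
      Ideal.span {(MvPolynomial.X 1 : MvPolynomial (Fin 2) ℝ) ^ m -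
        Polynomial.aeval (MvPolynomial.X 0 : MvPolynomial (Fin 2) ℝ) φ}) :
    ∀ k, c k = 0 := by
  classical
  have hm1 : 1 ≤ m := by rcases hm with rfl | rfl <;> norm_num
  have hφ0 : φ ≠ 0 := fun h => by simp [h] at hφ
  have hφnat : φ.natDegree = d := Polynomial.natDegree_eq_of_degree_eq_some hφ
  have hcase : n + 1 ≤ d ∨ (m = 2 ∧ d = 1 ∧ n = 1) := by
    rcases hm with rfl | rfl
    · left; rwa [max_eq_left hd] at hn
    · rcases le_or_gt 2 d with h | h
      · left; rwa [max_eq_left h] at hn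
      · have hd1 : d = 1 := by omega
        by_cases hn0 : n = 0
        · left; omega
        · right
          refine ⟨rfl, hd1, ?_⟩
          rw [hd1] at hn
          simp at hn
          omega
  set f : Polynomial (Polynomial ℝ) := Polynomial.X ^ m - Polynomial.C φ with hfdef
  obtain ⟨g, hg⟩ := Ideal.mem_span_singleton'.mp hmem
  have hΦeval : (Polynomial.aeval (Polynomial.C Polynomial.X : Polynomial (Polynomial ℝ))) φ
      = Polynomial.C φ := by
    have h1 := Polynomial.aeval_algHom_apply
      (IsScalarTower.toAlgHom ℝ (Polynomial ℝ) (Polynomial (Polynomial ℝ))) Polynomial.X φ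
    simpa [Polynomial.aeval_X_left_apply, Polynomial.algebraMap_eq] using h1
  have hθcurve : θR ((MvPolynomial.X 1 : MvPolynomial (Fin 2) ℝ) ^ m -
      Polynomial.aeval (MvPolynomial.X 0) φ) = f := by
    rw [map_sub, map_pow, θR_X1]
    congr 1
    rw [← Polynomial.aeval_algHom_apply, θR_X0, hΦeval]
  have hdvdPQ : f ∣ θR (∑ k : Fin (n + 1), c k •
      ((MvPolynomial.X 0 : MvPolynomial (Fin 2) ℝ) ^ (n - (k : ℕ)) *
        (MvPolynomial.X 1 : MvPolynomial (Fin 2) ℝ) ^ (k : ℕ))) - θR Q := by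
    refine ⟨θR g, ?_⟩
    rw [← map_sub, ← hg, map_mul, hθcurve]
    ring
  have hcoeffQ : ∀ b, (θR Q).coeff b ≠ 0 → ((θR Q).coeff b).natDegree + b < n := by
    intro b hb
    have h1 := θR_coeff_bound Q b hb
    rcases hQ with rfl | hQd
    · rw [map_zero] at hb; simp at hb
    · omega
  have hQ0 : ∀ b, n ≤ b → (θR Q).coeff b = 0 := by
    intro b hb; by_contra h; have := hcoeffQ b h; omega
  set NP : Polynomial (Polynomial ℝ) := ∑ k : Fin (n + 1),
      Polynomial.C (c k • (Polynomial.X ^ (n - (k : ℕ)) * φ ^ ((k : ℕ) / m))) *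
        Polynomial.X ^ ((k : ℕ) % m) with hNPdef
  set NQ : Polynomial (Polynomial ℝ) := ∑ b ∈ Finset.range n,
      Polynomial.C ((θR Q).coeff b * φ ^ (b / m)) * Polynomial.X ^ (b % m) with hNQdef
  have hQrepr : θR Q = ∑ b ∈ Finset.range n,
      Polynomial.C ((θR Q).coeff b) * Polynomial.X ^ b := by
    refine Polynomial.ext fun j => ?_
    rw [Polynomial.finset_sum_coeff]
    simp only [Polynomial.coeff_C_mul, Polynomial.coeff_X_pow, mul_ite, mul_one, mul_zero]
    rw [Finset.sum_ite_eq]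
    split
    · rfl
    · next hj => exact hQ0 j (by simpa using hj)
  have hdvdP : f ∣ θR (∑ k : Fin (n + 1), c k •
      ((MvPolynomial.X 0 : MvPolynomial (Fin 2) ℝ) ^ (n - (k : ℕ)) *
        (MvPolynomial.X 1 : MvPolynomial (Fin 2) ℝ) ^ (k : ℕ))) - NP := by
    rw [map_sum, hNPdef, ← Finset.sum_sub_distrib]
    refine Finset.dvd_sum fun k _ => ?_
    rw [map_smul, map_mul, map_pow, map_pow, θR_X0, θR_X1, ← Polynomial.C_pow]
    rw [show Polynomial.C (c k • (Polynomial.X ^ (n - (k : ℕ)) * φ ^ ((k : ℕ) / m))) *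
        Polynomial.X ^ ((k : ℕ) % m)
        = c k • (Polynomial.C (Polynomial.X ^ (n - (k : ℕ)) * φ ^ ((k : ℕ) / m)) *
          Polynomial.X ^ ((k : ℕ) % m)) from by
      rw [← Polynomial.smul_C, smul_mul_assoc]]
    rw [← smul_sub, Algebra.smul_def]
    refine Dvd.dvd.mul_left ?_ _
    rw [map_mul, show Polynomial.C (Polynomial.X ^ (n - (k:ℕ))) * Polynomial.X ^ (k:ℕ) -
        Polynomial.C (Polynomial.X ^ (n - (k:ℕ))) * Polynomial.C (φ ^ ((k:ℕ)/m)) *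
          Polynomial.X ^ ((k:ℕ)%m)
        = Polynomial.C (Polynomial.X ^ (n - (k:ℕ))) * (Polynomial.X ^ (k:ℕ) -
          Polynomial.C (φ ^ ((k:ℕ)/m)) * Polynomial.X ^ ((k:ℕ)%m)) from by ring]
    exact (red_dvd φ m (k:ℕ)).mul_left _
  have hdvdQ : f ∣ θR Q - NQ := by
    rw [hQrepr, hNQdef, ← Finset.sum_sub_distrib]
    refine Finset.dvd_sum fun b _ => ?_
    rw [show Polynomial.C ((θR Q).coeff b) * Polynomial.X ^ b -
        Polynomial.C ((θR Q).coeff b * φ ^ (b / m)) * Polynomial.X ^ (b % m)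
        = Polynomial.C ((θR Q).coeff b) * (Polynomial.X ^ b -
          Polynomial.C (φ ^ (b / m)) * Polynomial.X ^ (b % m)) from by
      rw [map_mul]; ring]
    exact (red_dvd φ m b).mul_left _
  have hdvdN : f ∣ NP - NQ := by
    have h2 : NP - NQ = (θR (∑ k : Fin (n + 1), c k •
        ((MvPolynomial.X 0 : MvPolynomial (Fin 2) ℝ) ^ (n - (k : ℕ)) *
          (MvPolynomial.X 1 : MvPolynomial (Fin 2) ℝ) ^ (k : ℕ))) - θR Q) -
        (θR (∑ k : Fin (n + 1), c k •
        ((MvPolynomial.X 0 : MvPolynomial (Fin 2) ℝ) ^ (n - (k : ℕ)) *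
          (MvPolynomial.X 1 : MvPolynomial (Fin 2) ℝ) ^ (k : ℕ))) - NP) + (θR Q - NQ) := by
      ring
    rw [h2]
    exact dvd_add (dvd_sub hdvdPQ hdvdP) hdvdQ
  have hfdeg : f.degree = (m : WithBot ℕ) := by
    rw [hfdef]; exact Polynomial.degree_X_pow_sub_C (by omega) φ
  have hNdeg : (NP - NQ).degree < (m : WithBot ℕ) := by
    have hterm : ∀ (a : Polynomial ℝ) (e : ℕ), e < m →
        (Polynomial.C a * Polynomial.X ^ e : Polynomial (Polynomial ℝ)).degree
          < (m : WithBot ℕ) := fun a e he =>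
      lt_of_le_of_lt (Polynomial.degree_C_mul_X_pow_le e a) (by exact_mod_cast he)
    refine lt_of_le_of_lt (Polynomial.degree_sub_le _ _) (max_lt ?_ ?_)
    · rw [hNPdef]
      refine lt_of_le_of_lt (Polynomial.degree_sum_le _ _) ?_
      rw [Finset.sup_lt_iff (show (⊥ : WithBot ℕ) < (m : ℕ) by exact_mod_cast WithBot.bot_lt_coe m)]
      exact fun k _ => hterm _ _ (Nat.mod_lt _ (by omega))
    · rw [hNQdef]
      refine lt_of_le_of_lt (Polynomial.degree_sum_le _ _) ?_
      rw [Finset.sup_lt_iff (show (⊥ : WithBot ℕ) < (m : ℕ) by exact_mod_cast WithBot.bot_lt_coe m)]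
      exact fun b _ => hterm _ _ (Nat.mod_lt _ (by omega))
  have hN0 : NP - NQ = 0 :=
    Polynomial.eq_zero_of_dvd_of_degree_lt hdvdN (by rw [hfdeg]; exact hNdeg)
  intro k₀
  have hcoeff0 : NP.coeff ((k₀:ℕ) % m) - NQ.coeff ((k₀:ℕ) % m) = 0 := by
    rw [← Polynomial.coeff_sub, hN0, Polynomial.coeff_zero]
  have hNPcoeff : NP.coeff ((k₀:ℕ) % m) = ∑ k : Fin (n + 1),
      (if (k₀:ℕ) % m = (k:ℕ) % m then
        c k • (Polynomial.X ^ (n - (k:ℕ)) * φ ^ ((k:ℕ)/m)) else 0) := by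
    rw [hNPdef, Polynomial.finset_sum_coeff]
    refine Finset.sum_congr rfl fun k _ => ?_
    rw [Polynomial.coeff_C_mul, Polynomial.coeff_X_pow, mul_ite, mul_one, mul_zero]
  have hNQcoeff : NQ.coeff ((k₀:ℕ) % m) = ∑ b ∈ Finset.range n,
      (if (k₀:ℕ) % m = b % m then (θR Q).coeff b * φ ^ (b/m) else 0) := by
    rw [hNQdef, Polynomial.finset_sum_coeff]
    refine Finset.sum_congr rfl fun b _ => ?_
    rw [Polynomial.coeff_C_mul, Polynomial.coeff_X_pow, mul_ite, mul_one, mul_zero]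
  set G : Fin (n + 1) ⊕ ℕ → Polynomial ℝ := Sum.elim
    (fun k => if (k₀:ℕ) % m = (k:ℕ) % m then
      c k • (Polynomial.X ^ (n - (k:ℕ)) * φ ^ ((k:ℕ)/m)) else 0)
    (fun b => if (k₀:ℕ) % m = b % m then -((θR Q).coeff b * φ ^ (b/m)) else 0) with hGdef
  have hsumG : ∑ i ∈ Finset.univ.disjSum (Finset.range n), G i = 0 := by
    rw [Finset.sum_disjSum]
    simp only [hGdef, Sum.elim_inl, Sum.elim_inr]
    rw [← hNPcoeff]
    have h3 : ∑ b ∈ Finset.range n,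
        (if (k₀:ℕ) % m = b % m then -((θR Q).coeff b * φ ^ (b/m)) else 0)
        = -NQ.coeff ((k₀:ℕ) % m) := by
      rw [hNQcoeff, ← Finset.sum_neg_distrib]
      refine Finset.sum_congr rfl fun b _ => ?_
      split <;> simp
    rw [h3]
    linear_combination hcoeff0
  have hdegL : ∀ k : Fin (n + 1), G (Sum.inl k) ≠ 0 →
      c k ≠ 0 ∧ (k₀:ℕ) % m = (k:ℕ) % m ∧
      (G (Sum.inl k)).natDegree = (n - (k:ℕ)) + ((k:ℕ)/m) * d := by
    intro k hk
    have hpk : (k₀:ℕ) % m = (k:ℕ) % m := by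
      by_contra h; rw [hGdef] at hk; simp [h] at hk
    have hck : c k ≠ 0 := by
      intro h; rw [hGdef] at hk; simp [h] at hk
    refine ⟨hck, hpk, ?_⟩
    rw [hGdef]
    simp only [Sum.elim_inl, if_pos hpk]
    rw [Polynomial.smul_eq_C_mul, Polynomial.natDegree_C_mul hck,
      Polynomial.natDegree_mul (pow_ne_zero _ Polynomial.X_ne_zero) (pow_ne_zero _ hφ0),
      Polynomial.natDegree_X_pow, Polynomial.natDegree_pow, hφnat]
  have hdegR : ∀ b : ℕ, G (Sum.inr b) ≠ 0 →
      (θR Q).coeff b ≠ 0 ∧ (k₀:ℕ) % m = b % m ∧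
      (G (Sum.inr b)).natDegree = ((θR Q).coeff b).natDegree + (b/m) * d := by
    intro b hb
    have hpb : (k₀:ℕ) % m = b % m := by
      by_contra h; rw [hGdef] at hb; simp [h] at hb
    have hqb : (θR Q).coeff b ≠ 0 := by
      intro h; rw [hGdef] at hb; simp [h] at hb
    refine ⟨hqb, hpb, ?_⟩
    rw [hGdef]
    simp only [Sum.elim_inr, if_pos hpb]
    rw [Polynomial.natDegree_neg,
      Polynomial.natDegree_mul hqb (pow_ne_zero _ hφ0),
      Polynomial.natDegree_pow, hφnat]
  have hdist : ∀ i ∈ Finset.univ.disjSum (Finset.range n),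
      ∀ j ∈ Finset.univ.disjSum (Finset.range n),
      G i ≠ 0 → G j ≠ 0 → (G i).degree = (G j).degree → i = j := by
    intro i hi j hj hGi hGj hdeg
    rw [Polynomial.degree_eq_natDegree hGi, Polynomial.degree_eq_natDegree hGj] at hdeg
    have hdeg' : (G i).natDegree = (G j).natDegree := by exact_mod_cast hdeg
    obtain k | b := i <;> obtain k' | b' := j
    · obtain ⟨hck, hpk, hdk⟩ := hdegL k hGi
      obtain ⟨hck', hpk', hdk'⟩ := hdegL k' hGj
      rw [hdk, hdk'] at hdeg'
      rcases Nat.lt_trichotomy (k:ℕ) (k':ℕ) with h | h | h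
      · exact (key_cc m d n k k' hm hcase (by omega) (by omega)
          (by rw [← hpk, hpk']) h hdeg').elim
      · exact congrArg Sum.inl (Fin.ext h)
      · exact (key_cc m d n k' k hm hcase (by omega) (by omega)
          (by rw [← hpk', hpk]) h hdeg'.symm).elim
    · obtain ⟨hck, hpk, hdk⟩ := hdegL k hGi
      obtain ⟨hqb, hpb, hdb⟩ := hdegR b' hGj
      rw [hdk, hdb] at hdeg'
      exact (key_cq m d n k b' ((θR Q).coeff b').natDegree hm hcase (by omega)
        (hcoeffQ b' hqb) (by rw [← hpk, hpb]) hdeg').elim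
    · obtain ⟨hqb, hpb, hdb⟩ := hdegR b hGi
      obtain ⟨hck, hpk, hdk⟩ := hdegL k' hGj
      rw [hdb, hdk] at hdeg'
      exact (key_cq m d n k' b ((θR Q).coeff b).natDegree hm hcase (by omega)
        (hcoeffQ b hqb) (by rw [← hpk, hpb]) hdeg'.symm).elim
    · obtain ⟨hqb, hpb, hdb⟩ := hdegR b hGi
      obtain ⟨hqb', hpb', hdb'⟩ := hdegR b' hGj
      rw [hdb, hdb'] at hdeg'
      rcases Nat.lt_trichotomy b b' with h | h | h
      · exact (key_qq m d n b b' ((θR Q).coeff b).natDegree ((θR Q).coeff b').natDegree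
          hm hcase (hcoeffQ b hqb) (hcoeffQ b' hqb') (by rw [← hpb, hpb']) h hdeg').elim
      · exact congrArg Sum.inr h
      · exact (key_qq m d n b' b ((θR Q).coeff b').natDegree ((θR Q).coeff b).natDegree
          hm hcase (hcoeffQ b' hqb') (hcoeffQ b hqb) (by rw [← hpb', hpb]) h hdeg'.symm).elim
  have hall := sum_eq_zero_of_distinct_degrees _ G hdist hsumG (Sum.inl k₀)
    (Finset.inl_mem_disjSum.mpr (Finset.mem_univ _))
  rw [hGdef] at hall
  simp only [Sum.elim_inl, if_pos rfl] at hall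
  rcases smul_eq_zero.mp hall with h | h
  · exact h
  · exact absurd h (mul_ne_zero (pow_ne_zero _ Polynomial.X_ne_zero) (pow_ne_zero _ hφ0))
end

section
/- Orthonormality of the P-basis on the curve y² = φ(x) (Proposition 3.3, case m = 2): Assume additionally that φ.eval t ≥ 0 for μ-almost every t. Define functions F n, G n : ℝ → ℝ → ℝ by F n u v = (p n).eval u / Real.sqrt 2 and G n u v = v * (q n).eval u / Real.sqrt 2, and define the bilinear pairing B f g = ∫ ( f t (Real.sqrt (φ.eval t)) * g t (Real.sqrt (φ.eval t)) + f t (−Real.sqrt (φ.eval t)) * g t (−Real.sqrt (φ.eval t)) ) ∂μ. Then for all i, j: B (F i) (F j) = (if i = j then 1 else 0), B (G i) (G j) = (if i = j then 1 else 0), and B (F i) (G j) = 0. (These are the P-polynomials P_{n,0} = p_n(w)/√2 and P_{n+1,1} = y·p_n(φw)/√2, orthonormal with respect to ⟨·,·⟩_{γ_{2,d},w}.) -/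
open MeasureTheory

/-- Orthonormality of the `P`-basis on the curve `y² = φ(x)`:
`P_{n,0} = p_n(w)/√2` and `P_{n+1,1} = y·p_n(φw)/√2` are orthonormal with
respect to the curve inner product. -/
theorem P_basis_orthonormal_m2
    (μ : Measure ℝ)
    (hint : ∀ P : Polynomial ℝ, Integrable (fun t => P.eval t) μ)
    (d : ℕ) (φ : Polynomial ℝ) (hφ : φ.degree = d)
    (p q : ℕ → Polynomial ℝ)
    (hpdeg : ∀ n, (p n).degree = n)
    (hqdeg : ∀ n, (q n).degree = n)
    (hp : ∀ i j, (∫ t, (p i).eval t * (p j).eval t ∂μ) = if i = j then 1 else 0)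
    (hq : ∀ i j, (∫ t, (q i).eval t * (q j).eval t * φ.eval t ∂μ) = if i = j then 1 else 0)
    (hφnn : ∀ᵐ t ∂μ, 0 ≤ φ.eval t)
    (F G : ℕ → ℝ → ℝ → ℝ)
    (hF : ∀ n u v, F n u v = (p n).eval u / Real.sqrt 2)
    (hG : ∀ n u v, G n u v = v * (q n).eval u / Real.sqrt 2)
    (B : (ℝ → ℝ → ℝ) → (ℝ → ℝ → ℝ) → ℝ)
    (hB : ∀ f g : ℝ → ℝ → ℝ, B f g = ∫ t,
      (f t (Real.sqrt (φ.eval t)) * g t (Real.sqrt (φ.eval t)) +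
        f t (-Real.sqrt (φ.eval t)) * g t (-Real.sqrt (φ.eval t))) ∂μ) :
    (∀ i j, B (F i) (F j) = if i = j then 1 else 0) ∧
    (∀ i j, B (G i) (G j) = if i = j then 1 else 0) ∧
    (∀ i j, B (F i) (G j) = 0) := by
  have h2 : Real.sqrt 2 * Real.sqrt 2 = 2 := Real.mul_self_sqrt (by norm_num)
  have h2ne : Real.sqrt 2 ≠ 0 := by positivity
  refine ⟨?_, ?_, ?_⟩
  · intro i j
    rw [hB, ← hp i j]
    refine integral_congr_ae (Filter.Eventually.of_forall fun t => ?_)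
    simp only [hF]
    field_simp
    linear_combination (-(Polynomial.eval t (p i) * Polynomial.eval t (p j))) * h2
  · intro i j
    rw [hB, ← hq i j]
    refine integral_congr_ae (hφnn.mono fun t ht => ?_)
    simp only [hG]
    have hs : Real.sqrt (φ.eval t) * Real.sqrt (φ.eval t) = φ.eval t :=
      Real.mul_self_sqrt ht
    field_simp
    linear_combination 2 * (Polynomial.eval t (q i) * Polynomial.eval t (q j)) * hs
      - (Polynomial.eval t (q i) * Polynomial.eval t (q j) * Polynomial.eval t φ) * h2
  · intro i j
    rw [hB]
    have : (∫ t, (F i t (Real.sqrt (φ.eval t)) * G j t (Real.sqrt (φ.eval t)) +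
        F i t (-Real.sqrt (φ.eval t)) * G j t (-Real.sqrt (φ.eval t))) ∂μ)
        = ∫ _t, (0:ℝ) ∂μ := by
      refine integral_congr_ae (Filter.Eventually.of_forall fun t => ?_)
      simp only [hF, hG]
      ring
    rw [this, integral_zero]
end

section
/- Minimal degrees on quadratic curves y² = φ(x), deg φ ≤ 2 (degree claims underlying Proposition 4.1, case m = 2, d ∈ {1,2}): Suppose 1 ≤ Polynomial.degree φ ≤ 2. Then for every n ≥ 1: (a) every Q ∈ R with x^n − Q ∈ I_2 satisfies n ≤ totalDegree Q; and (b) every Q ∈ R with y * x^(n−1) − Q ∈ I_2 satisfies n ≤ totalDegree Q. Hence the monomials x^n and y·x^{n−1} both have minimal degree exactly n on the curve y² = φ(x). -/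
open Polynomial

noncomputable def curveMap : MvPolynomial (Fin 2) ℝ →ₐ[ℝ] Polynomial (Polynomial ℝ) :=
  MvPolynomial.aeval ![Polynomial.X, Polynomial.C Polynomial.X * Polynomial.X]

lemma curveMap_X0 : curveMap (MvPolynomial.X 0) = Polynomial.X := by
  simp [curveMap]

lemma curveMap_X1 : curveMap (MvPolynomial.X 1) = Polynomial.C Polynomial.X * Polynomial.X := by
  simp [curveMap]

example (f : ℝ →+* Polynomial ℝ) (p : Polynomial ℝ) : p.map f = eval₂ (C.comp f) X p := rfl

lemma curveMap_natDegree_le (P : MvPolynomial (Fin 2) ℝ) :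
    (curveMap P).natDegree ≤ P.totalDegree := by
  conv_lhs => rw [MvPolynomial.as_sum P]
  rw [map_sum]
  apply Polynomial.natDegree_sum_le_of_forall_le
  intro v hv
  have h1 : curveMap (MvPolynomial.monomial v (MvPolynomial.coeff v P)) =
      Polynomial.C (Polynomial.C (MvPolynomial.coeff v P)) *
        (Polynomial.X ^ v 0 * (Polynomial.C Polynomial.X * Polynomial.X) ^ v 1) := by
    rw [curveMap, MvPolynomial.aeval_monomial,
      Finsupp.prod_fintype _ _ (fun i => pow_zero _), Fin.prod_univ_two]
    simp [Polynomial.algebraMap_apply]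
  rw [h1]
  have hb : (Polynomial.C (Polynomial.C (MvPolynomial.coeff v P)) *
        (Polynomial.X ^ v 0 * (Polynomial.C Polynomial.X * Polynomial.X) ^ v 1)).natDegree
      ≤ 0 + (v 0 + v 1) := by
    apply (Polynomial.natDegree_mul_le).trans
    gcongr
    · exact le_of_eq (Polynomial.natDegree_C _)
    · apply (Polynomial.natDegree_mul_le).trans
      gcongr
      · exact (Polynomial.natDegree_pow_le).trans (by simp)
      · apply (Polynomial.natDegree_pow_le).trans
        have : (Polynomial.C Polynomial.X * Polynomial.X : Polynomial (Polynomial ℝ)).natDegree ≤ 1 :=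
          (Polynomial.natDegree_mul_le).trans (by simp)
        calc v 1 * (Polynomial.C Polynomial.X * Polynomial.X : Polynomial (Polynomial ℝ)).natDegree
            ≤ v 1 * 1 := by exact Nat.mul_le_mul_left _ this
          _ = v 1 := by omega
  refine hb.trans ?_
  rw [zero_add]
  have := MvPolynomial.le_totalDegree (p := P) hv
  rwa [Finsupp.sum_fintype _ _ (fun i => rfl), Fin.sum_univ_two] at this


lemma curveMap_aeval (φ : Polynomial ℝ) :
    curveMap (Polynomial.aeval (MvPolynomial.X 0) φ) =
      φ.map (Polynomial.C : ℝ →+* Polynomial ℝ) := by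
  rw [← Polynomial.aeval_algHom_apply, curveMap_X0, Polynomial.aeval_def]
  have : (algebraMap ℝ (Polynomial (Polynomial ℝ))) =
      (Polynomial.C.comp (Polynomial.C : ℝ →+* Polynomial ℝ)) :=
    RingHom.ext fun r => by simp [Polynomial.algebraMap_apply]
  rw [this]
  rfl

lemma curve_key (φ : Polynomial ℝ) (h2 : φ.degree ≤ 2) (n : ℕ)
    (r : Polynomial ℝ) (hr : r.natDegree ≤ 1) (hr0 : r ≠ 0)
    (F Q : MvPolynomial (Fin 2) ℝ)
    (hF : curveMap F = Polynomial.C r * Polynomial.X ^ n)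
    (hmem : F - Q ∈ Ideal.span {(MvPolynomial.X 1 : MvPolynomial (Fin 2) ℝ) ^ 2 -
          Polynomial.aeval (MvPolynomial.X 0 : MvPolynomial (Fin 2) ℝ) φ}) :
    n ≤ Q.totalDegree := by
  by_contra hQ
  push_neg at hQ
  obtain ⟨g, hg⟩ := Ideal.mem_span_singleton.mp hmem
  set W : MvPolynomial (Fin 2) ℝ := (MvPolynomial.X 1) ^ 2 -
      Polynomial.aeval (MvPolynomial.X 0 : MvPolynomial (Fin 2) ℝ) φ with hW
  set c : ℝ := φ.coeff 2 with hc
  have hφdeg : φ.natDegree ≤ 2 := Polynomial.natDegree_le_iff_degree_le.mpr h2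
  have hWc : curveMap W = Polynomial.C (Polynomial.X ^ 2) * Polynomial.X ^ 2 -
      φ.map (Polynomial.C : ℝ →+* Polynomial ℝ) := by
    rw [hW, map_sub, map_pow, curveMap_X1, curveMap_aeval, mul_pow, ← Polynomial.C_pow]
  have hWc2 : (curveMap W).coeff 2 = Polynomial.X ^ 2 - Polynomial.C c := by
    rw [hWc, Polynomial.coeff_sub, Polynomial.coeff_C_mul, Polynomial.coeff_X_pow,
      if_pos rfl, mul_one, Polynomial.coeff_map, hc]
  have hXc0 : (Polynomial.X ^ 2 - Polynomial.C c : Polynomial ℝ) ≠ 0 :=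
    Polynomial.X_pow_sub_C_ne_zero (by norm_num) c
  have hWcdeg : (curveMap W).natDegree ≤ 2 := by
    rw [hWc]
    apply (Polynomial.natDegree_sub_le _ _).trans
    apply max_le
    · exact (Polynomial.natDegree_mul_le).trans (by simp)
    · exact (Polynomial.natDegree_map_le).trans hφdeg
  have hWdeg : (curveMap W).natDegree = 2 :=
    le_antisymm hWcdeg (Polynomial.le_natDegree_of_ne_zero (by rw [hWc2]; exact hXc0))
  have hWlead : (curveMap W).leadingCoeff = Polynomial.X ^ 2 - Polynomial.C c := by
    rw [Polynomial.leadingCoeff, hWdeg, hWc2]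
  have hW0 : curveMap W ≠ 0 := fun h => by
    rw [h] at hWc2; simp at hWc2; exact hXc0 hWc2.symm
  -- the image equation
  have hEq : curveMap F - curveMap Q = curveMap W * curveMap g := by
    rw [← map_sub, hg, map_mul]
  set L := curveMap F - curveMap Q with hL
  have hQcoeff : (curveMap Q).coeff n = 0 :=
    Polynomial.coeff_eq_zero_of_natDegree_lt (lt_of_le_of_lt (curveMap_natDegree_le Q) hQ)
  have hLcoeff : L.coeff n = r := by
    rw [hL, Polynomial.coeff_sub, hQcoeff, hF, sub_zero, Polynomial.coeff_C_mul,
      Polynomial.coeff_X_pow, if_pos rfl, mul_one]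
  have hLne : L ≠ 0 := fun h => hr0 (by rw [← hLcoeff, h, Polynomial.coeff_zero])
  have hLdegle : L.natDegree ≤ n := by
    rw [hL]
    apply (Polynomial.natDegree_sub_le _ _).trans
    apply max_le
    · rw [hF]; exact (Polynomial.natDegree_mul_le).trans (by simp)
    · exact ((curveMap_natDegree_le Q).trans hQ.le)
  have hLdeg : L.natDegree = n :=
    le_antisymm hLdegle (Polynomial.le_natDegree_of_ne_zero (by rw [hLcoeff]; exact hr0))
  have hLlead : L.leadingCoeff = r := by rw [Polynomial.leadingCoeff, hLdeg, hLcoeff]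
  have hg0 : curveMap g ≠ 0 := by
    intro h
    rw [hEq, h, mul_zero] at hLne
    exact hLne rfl
  have key : r = (Polynomial.X ^ 2 - Polynomial.C c) * (curveMap g).leadingCoeff := by
    rw [← hLlead, hEq, Polynomial.leadingCoeff_mul, hWlead]
  have hlg0 : (curveMap g).leadingCoeff ≠ 0 := Polynomial.leadingCoeff_ne_zero.mpr hg0
  have : r.natDegree = 2 + (curveMap g).leadingCoeff.natDegree := by
    rw [key, Polynomial.natDegree_mul hXc0 hlg0, Polynomial.natDegree_X_pow_sub_C]
  omega


/-- Minimal degrees on quadratic curves `y² = φ(x)`, `1 ≤ deg φ ≤ 2`: the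
monomials `x^n` and `y·x^{n-1}` both have minimal degree exactly `n`. -/
theorem curve_degree_quadratic_m2
    (φ : Polynomial ℝ) (h1 : 1 ≤ φ.degree) (h2 : φ.degree ≤ 2)
    (n : ℕ) (hn : 1 ≤ n) :
    (∀ Q : MvPolynomial (Fin 2) ℝ,
      (MvPolynomial.X 0 : MvPolynomial (Fin 2) ℝ) ^ n - Q ∈
        Ideal.span {(MvPolynomial.X 1 : MvPolynomial (Fin 2) ℝ) ^ 2 -
          Polynomial.aeval (MvPolynomial.X 0 : MvPolynomial (Fin 2) ℝ) φ} →
      n ≤ Q.totalDegree) ∧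
    (∀ Q : MvPolynomial (Fin 2) ℝ,
      (MvPolynomial.X 1 : MvPolynomial (Fin 2) ℝ) *
        (MvPolynomial.X 0 : MvPolynomial (Fin 2) ℝ) ^ (n - 1) - Q ∈
        Ideal.span {(MvPolynomial.X 1 : MvPolynomial (Fin 2) ℝ) ^ 2 -
          Polynomial.aeval (MvPolynomial.X 0 : MvPolynomial (Fin 2) ℝ) φ} →
      n ≤ Q.totalDegree) := by
  constructor
  · intro Q hQ
    refine curve_key φ h2 n 1 (by simp) one_ne_zero _ Q ?_ hQ
    rw [map_pow, curveMap_X0, Polynomial.C_1, one_mul]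
  · intro Q hQ
    refine curve_key φ h2 n Polynomial.X (by simp) Polynomial.X_ne_zero _ Q ?_ hQ
    rw [map_mul, map_pow, curveMap_X0, curveMap_X1]
    have hn1 : n - 1 + 1 = n := by omega
    rw [mul_assoc, ← pow_succ', hn1]
end

section
/- Curve-degree of x^{3n} on the cubic curve y² = φ(x), deg φ = 3 (degree claim underlying Proposition 4.1, cubic case): Suppose Polynomial.degree φ = 3 and let n ≥ 1. Then: (a) there exists Q ∈ R with totalDegree Q ≤ 2n and x^(3n) − Q ∈ I_2; and (b) for every Q ∈ R with x^(3n) − Q ∈ I_2, one has 2n ≤ totalDegree Q. Hence the minimal degree of x^{3n} on the curve y² = φ(x) equals 2n. -/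
open Polynomial

namespace CurveAux

noncomputable def h : MvPolynomial (Fin 2) ℝ →ₐ[ℝ] Polynomial (Polynomial ℝ) :=
  MvPolynomial.aeval ![Polynomial.C Polynomial.X, Polynomial.X]

noncomputable def M (φ : ℝ[X]) : Polynomial (ℝ[X]) := X ^ 2 - C φ

lemma monic_M (φ : ℝ[X]) : (M φ).Monic :=
  monic_X_pow_sub (lt_of_le_of_lt degree_C_le (by decide))

lemma degree_M (φ : ℝ[X]) : (M φ).degree = 2 := by
  have hlt : degree (C φ) < degree (X ^ 2 : Polynomial (ℝ[X])) := by
    rw [degree_X_pow]; exact lt_of_le_of_lt degree_C_le (by decide)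
  rw [M, degree_sub_eq_left_of_degree_lt hlt, degree_X_pow]
  norm_num

lemma aeval_C_X (φ : ℝ[X]) :
    Polynomial.aeval (C X : Polynomial (ℝ[X])) φ = C φ := by
  induction φ using Polynomial.induction_on' with
  | add p q hp hq => simp [hp, hq]
  | monomial i r =>
      rw [Polynomial.aeval_monomial, Polynomial.algebraMap_apply,
        Polynomial.algebraMap_apply, ← Polynomial.C_pow, ← Polynomial.C_mul,
        Polynomial.C_mul_X_pow_eq_monomial]
      simp

lemma h_gen (φ : ℝ[X]) :
    h ((MvPolynomial.X 1 : MvPolynomial (Fin 2) ℝ) ^ 2 -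
      Polynomial.aeval (MvPolynomial.X 0) φ) = M φ := by
  have h0 : h (MvPolynomial.X 0) = C X := by simp [h]
  have h1 : h (MvPolynomial.X 1) = X := by simp [h]
  rw [map_sub, map_pow, h1, ← Polynomial.aeval_algHom_apply, h0, aeval_C_X, M]

lemma h_monomial (m : Fin 2 →₀ ℕ) (c : ℝ) :
    h (MvPolynomial.monomial m c) = C (C c * X ^ (m 0)) * X ^ (m 1) := by
  rw [h, MvPolynomial.aeval_monomial,
    Finsupp.prod_fintype _ _ (fun i => pow_zero _), Fin.prod_univ_two]
  rw [Matrix.cons_val_zero, Matrix.cons_val_one, Matrix.cons_val_zero,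
    Polynomial.algebraMap_apply, Polynomial.algebraMap_apply, ← Polynomial.C_pow,
    ← mul_assoc, ← Polynomial.C_mul]
  norm_num

lemma mod_C_mul_X_pow (φ p : ℝ[X]) (b : ℕ) :
    (C p * X ^ b) %ₘ M φ =
      if Even b then C (p * φ ^ (b / 2)) else C (p * φ ^ (b / 2)) * X := by
  have key : ∀ j : ℕ, M φ ∣ C p * X ^ (2 * j) - C (p * φ ^ j) := by
    intro j
    have : C p * X ^ (2 * j) - C (p * φ ^ j)
        = C p * ((X ^ 2) ^ j - (C φ) ^ j) := by
      rw [map_mul, map_pow, ← pow_mul]; ring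
    rw [this]
    exact Dvd.dvd.mul_left (sub_dvd_pow_sub_pow _ _ j) _
  rcases Nat.even_or_odd b with he | ho
  · obtain ⟨j, hj⟩ := he
    have hj2 : b / 2 = j := by omega
    rw [if_pos ⟨j, hj⟩, hj2]
    have hb : b = 2 * j := by omega
    rw [hb, modByMonic_eq_of_dvd_sub (monic_M φ) (key j),
      (modByMonic_eq_self_iff (monic_M φ)).2]
    rw [degree_M]
    exact lt_of_le_of_lt degree_C_le (by decide)
  · obtain ⟨j, hj⟩ := ho
    have hj2 : b / 2 = j := by omega
    rw [if_neg (Nat.not_even_iff_odd.2 ⟨j, hj⟩), hj2]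
    have hdvd : M φ ∣ C p * X ^ b - C (p * φ ^ j) * X := by
      have : C p * X ^ b - C (p * φ ^ j) * X
          = (C p * X ^ (2 * j) - C (p * φ ^ j)) * X := by
        rw [hj]; ring
      rw [this]
      exact Dvd.dvd.mul_right (key j) _
    rw [modByMonic_eq_of_dvd_sub (monic_M φ) hdvd,
      (modByMonic_eq_self_iff (monic_M φ)).2]
    rw [degree_M]
    refine lt_of_le_of_lt (degree_mul_le _ _) ?_
    refine lt_of_le_of_lt (add_le_add degree_C_le degree_X_le) (by decide)

noncomputable def α (φ : ℝ[X]) (P : MvPolynomial (Fin 2) ℝ) : ℝ[X] :=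
  ((h P) %ₘ M φ).coeff 0

lemma α_sub (φ : ℝ[X]) (P P' : MvPolynomial (Fin 2) ℝ) :
    α φ (P - P') = α φ P - α φ P' := by
  simp [α, map_sub, sub_modByMonic, coeff_sub]

lemma α_add (φ : ℝ[X]) (P P' : MvPolynomial (Fin 2) ℝ) :
    α φ (P + P') = α φ P + α φ P' := by
  simp [α, map_add, add_modByMonic, coeff_add]

lemma α_sum (φ : ℝ[X]) {ι : Type*} (s : Finset ι) (f : ι → MvPolynomial (Fin 2) ℝ) :
    α φ (∑ i ∈ s, f i) = ∑ i ∈ s, α φ (f i) := by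
  classical
  induction s using Finset.induction_on with
  | empty => simp [α, zero_modByMonic]
  | @insert a s hn ih => rw [Finset.sum_insert hn, Finset.sum_insert hn, α_add, ih]

lemma α_monomial (φ : ℝ[X]) (m : Fin 2 →₀ ℕ) (c : ℝ) :
    α φ (MvPolynomial.monomial m c) =
      if Even (m 1) then C c * X ^ (m 0) * φ ^ (m 1 / 2) else 0 := by
  rw [α, h_monomial, mod_C_mul_X_pow]
  split_ifs
  · rw [coeff_C_zero, mul_assoc]
  · simp [Polynomial.mul_coeff_zero]

lemma α_mul_gen (φ : ℝ[X]) (g : MvPolynomial (Fin 2) ℝ) :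
    α φ (g * ((MvPolynomial.X 1 : MvPolynomial (Fin 2) ℝ) ^ 2 -
      Polynomial.aeval (MvPolynomial.X 0) φ)) = 0 := by
  rw [α, map_mul, h_gen,
    (modByMonic_eq_zero_iff_dvd (monic_M φ)).2 (dvd_mul_left _ _), coeff_zero]

lemma α_xpow (φ : ℝ[X]) (k : ℕ) :
    α φ ((MvPolynomial.X 0 : MvPolynomial (Fin 2) ℝ) ^ k) = X ^ k := by
  have h0 : h ((MvPolynomial.X 0 : MvPolynomial (Fin 2) ℝ) ^ k) = C (X ^ k) := by
    have h0 : h (MvPolynomial.X 0) = C X := by simp [h]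
    rw [map_pow, h0, ← Polynomial.C_pow]
  rw [α, h0, (modByMonic_eq_self_iff (monic_M φ)).2, coeff_C_zero]
  rw [degree_M]
  exact lt_of_le_of_lt degree_C_le (by decide)

end CurveAux

open CurveAux in
/-- The minimal degree of `x^{3n}` on the cubic curve `y² = φ(x)`,
`deg φ = 3`, equals `2n`. -/
theorem curve_degree_x_pow_three_n_cubic
    (φ : Polynomial ℝ) (hφ : φ.degree = 3) (n : ℕ) (hn : 1 ≤ n) :
    (∃ Q : MvPolynomial (Fin 2) ℝ, Q.totalDegree ≤ 2 * n ∧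
      (MvPolynomial.X 0 : MvPolynomial (Fin 2) ℝ) ^ (3 * n) - Q ∈
        Ideal.span {(MvPolynomial.X 1 : MvPolynomial (Fin 2) ℝ) ^ 2 -
          Polynomial.aeval (MvPolynomial.X 0 : MvPolynomial (Fin 2) ℝ) φ}) ∧
    (∀ Q : MvPolynomial (Fin 2) ℝ,
      (MvPolynomial.X 0 : MvPolynomial (Fin 2) ℝ) ^ (3 * n) - Q ∈
        Ideal.span {(MvPolynomial.X 1 : MvPolynomial (Fin 2) ℝ) ^ 2 -
          Polynomial.aeval (MvPolynomial.X 0 : MvPolynomial (Fin 2) ℝ) φ} →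
      2 * n ≤ Q.totalDegree) := by
  have hφ0 : φ ≠ 0 := fun h => by simp [h] at hφ
  have hnd : φ.natDegree = 3 := natDegree_eq_of_degree_eq_some (by exact_mod_cast hφ)
  constructor
  · -- existence
    set c := φ.leadingCoeff with hc
    have hc0 : c ≠ 0 := leadingCoeff_ne_zero.2 hφ0
    set r : ℝ[X] := φ - C c * X ^ 3 with hr
    have hq3 : degree (C c * X ^ 3) = 3 := by
      exact_mod_cast degree_C_mul_X_pow 3 hc0
    have hrd : r.degree < 3 := by
      rw [hr, ← hφ]
      refine degree_sub_lt (by rw [hq3, hφ]) hφ0 ?_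
      rw [leadingCoeff_C_mul_X_pow]
    have hrnat : r.natDegree ≤ 2 := by
      by_cases h0 : r = 0
      · simp [h0]
      · have h3 : r.degree < (3 : ℕ) := by exact_mod_cast hrd
        have := (natDegree_lt_iff_degree_lt h0).2 h3
        omega
    set R2 : MvPolynomial (Fin 2) ℝ := Polynomial.aeval (MvPolynomial.X 0) r with hR2
    have hR2deg : R2.totalDegree ≤ 2 := by
      rw [hR2, Polynomial.aeval_eq_sum_range]
      refine le_trans (MvPolynomial.totalDegree_finset_sum _ _) ?_
      refine Finset.sup_le fun i hi => ?_
      refine le_trans (MvPolynomial.totalDegree_smul_le _ _) ?_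
      refine le_trans (MvPolynomial.totalDegree_pow _ _) ?_
      rw [MvPolynomial.totalDegree_X]
      rw [Finset.mem_range] at hi
      omega
    set Y := (MvPolynomial.X 1 : MvPolynomial (Fin 2) ℝ) with hY
    set Φ := Polynomial.aeval (MvPolynomial.X 0 : MvPolynomial (Fin 2) ℝ) φ with hΦ
    refine ⟨(c⁻¹ • (Y ^ 2 - R2)) ^ n, ?_, ?_⟩
    · refine le_trans (MvPolynomial.totalDegree_pow _ _) ?_
      have h2 : (c⁻¹ • (Y ^ 2 - R2)).totalDegree ≤ 2 := by
        refine le_trans (MvPolynomial.totalDegree_smul_le _ _) ?_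
        refine le_trans (MvPolynomial.totalDegree_sub _ _) ?_
        refine max_le ?_ hR2deg
        refine le_trans (MvPolynomial.totalDegree_pow _ _) ?_
        rw [MvPolynomial.totalDegree_X]
      calc n * (c⁻¹ • (Y ^ 2 - R2)).totalDegree ≤ n * 2 := Nat.mul_le_mul_left n h2
        _ = 2 * n := Nat.mul_comm n 2
    · rw [Ideal.mem_span_singleton]
      have hphi : Φ = c • (MvPolynomial.X 0 : MvPolynomial (Fin 2) ℝ) ^ 3 + R2 := by
        have hsplit : φ = C c * X ^ 3 + r := by rw [hr]; ring
        rw [hΦ, hR2]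
        conv_lhs => rw [hsplit]
        rw [map_add, map_mul, Polynomial.aeval_C, map_pow, Polynomial.aeval_X,
          MvPolynomial.smul_eq_C_mul, ← MvPolynomial.algebraMap_eq]
      have hx3 : (MvPolynomial.X 0 : MvPolynomial (Fin 2) ℝ) ^ 3 = c⁻¹ • (Φ - R2) := by
        rw [hphi, add_sub_cancel_right, smul_smul, inv_mul_cancel₀ hc0, one_smul]
      have key : Y ^ 2 - Φ ∣ (c⁻¹ • (Φ - R2)) ^ n - (c⁻¹ • (Y ^ 2 - R2)) ^ n := by
        refine dvd_trans ?_ (sub_dvd_pow_sub_pow _ _ n)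
        have hdiff : (c⁻¹ • (Φ - R2)) - (c⁻¹ • (Y ^ 2 - R2)) =
            MvPolynomial.C (-c⁻¹) * (Y ^ 2 - Φ) := by
          rw [← MvPolynomial.smul_eq_C_mul, ← smul_sub, sub_sub_sub_cancel_right,
            neg_smul, ← smul_neg, neg_sub]
        rw [hdiff]
        exact dvd_mul_left _ _
      have hpow : (MvPolynomial.X 0 : MvPolynomial (Fin 2) ℝ) ^ (3 * n) =
          (c⁻¹ • (Φ - R2)) ^ n := by
        rw [pow_mul, hx3]
      rw [hpow]
      exact key
  · -- lower bound
    intro Q hmem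
    by_contra hlt
    push_neg at hlt
    obtain ⟨g, hg⟩ := Ideal.mem_span_singleton'.1 hmem
    have hQ : Q = (MvPolynomial.X 0 : MvPolynomial (Fin 2) ℝ) ^ (3 * n) -
        g * ((MvPolynomial.X 1 : MvPolynomial (Fin 2) ℝ) ^ 2 -
          Polynomial.aeval (MvPolynomial.X 0) φ) := by
      linear_combination hg
    have hαQ : α φ Q = X ^ (3 * n) := by
      rw [hQ, α_sub, α_mul_gen, α_xpow, sub_zero]
    have hbound : (α φ Q).natDegree ≤ 3 * n - 2 := by
      conv_lhs => rw [← MvPolynomial.support_sum_monomial_coeff Q, α_sum]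
      refine natDegree_sum_le_of_forall_le _ _ (fun m hm => ?_)
      have hsum : m 0 + m 1 ≤ Q.totalDegree := by
        have h1 := MvPolynomial.le_totalDegree hm
        rwa [Finsupp.sum_fintype _ _ (fun _ => rfl), Fin.sum_univ_two] at h1
      rw [α_monomial]
      split_ifs with he
      · obtain ⟨j, hj⟩ := he
        have hj2 : m 1 / 2 = j := by omega
        rw [hj2]
        have e1 : (C (MvPolynomial.coeff m Q) * X ^ (m 0)).natDegree ≤ m 0 :=
          le_trans (natDegree_C_mul_le _ _) (by rw [natDegree_X_pow])
        have e2 : (φ ^ j).natDegree ≤ 3 * j :=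
          le_trans natDegree_pow_le (by rw [hnd]; omega)
        have hd1 := natDegree_mul_le (p := C (MvPolynomial.coeff m Q) * X ^ (m 0))
          (q := φ ^ j)
        omega
      · simp
    rw [hαQ, natDegree_X_pow] at hbound
    omega
end

section
/- Curve-degree of y·x^{3n−1} on the cubic curve y² = φ(x), deg φ = 3 (degree claim underlying Proposition 4.1, cubic case): Suppose Polynomial.degree φ = 3 and let n ≥ 1. Then: (a) there exists Q ∈ R with totalDegree Q ≤ 2n + 1 and y * x^(3n − 1) − Q ∈ I_2; and (b) for every Q ∈ R with y * x^(3n − 1) − Q ∈ I_2, one has 2n + 1 ≤ totalDegree Q. Hence the minimal degree of y·x^{3n−1} on the curve y² = φ(x) equals 2n + 1. -/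
open Polynomial MvPolynomial

noncomputable section
namespace CurveDeg

abbrev R2 := MvPolynomial (Fin 2) ℝ

lemma totalDegree_aeval_X0 (s : ℝ[X]) :
    (Polynomial.aeval (MvPolynomial.X 0 : R2) s).totalDegree ≤ s.natDegree := by
  rw [Polynomial.aeval_def, Polynomial.eval₂_eq_sum, Polynomial.sum]
  refine (MvPolynomial.totalDegree_finset_sum _ _).trans ?_
  refine Finset.sup_le fun i hi => ?_
  refine (MvPolynomial.totalDegree_mul _ _).trans ?_
  have h1 : (algebraMap ℝ R2 (s.coeff i)).totalDegree = 0 := MvPolynomial.totalDegree_C _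
  have h2 : ((MvPolynomial.X 0 : R2) ^ i).totalDegree ≤ i := by
    simp [MvPolynomial.totalDegree_pow (MvPolynomial.X 0 : R2) i]
  calc _ ≤ 0 + i := add_le_add h1.le h2
    _ ≤ s.natDegree := by simpa using Polynomial.le_natDegree_of_mem_supp i hi

lemma upper (φ : ℝ[X]) (hφ : φ.degree = 3) :
    ∀ m : ℕ, ∀ r : ℝ[X], r.degree < (3 * m : ℕ) →
    ∃ Q : R2, Q.totalDegree ≤ 2 * m + 1 ∧
      (MvPolynomial.X 1 : R2) * Polynomial.aeval (MvPolynomial.X 0) r - Q ∈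
        Ideal.span {(MvPolynomial.X 1 : R2) ^ 2 -
          Polynomial.aeval (MvPolynomial.X 0 : R2) φ} := by
  intro m
  induction m with
  | zero =>
    intro r hr
    have : r = 0 := by
      rw [← Polynomial.degree_eq_bot]
      simpa using hr
    exact ⟨0, by simp, by simp [this]⟩
  | succ m ih =>
    intro r hr
    have hφ0 : φ ≠ 0 := fun h => by simp [h] at hφ
    have hc0 : φ.leadingCoeff ≠ 0 := Polynomial.leadingCoeff_ne_zero.mpr hφ0
    set u := φ * Polynomial.C φ.leadingCoeff⁻¹ with hu_def
    have hu : u.Monic := Polynomial.monic_mul_leadingCoeff_inv hφ0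
    have hudeg : u.degree = 3 := by
      rw [hu_def, Polynomial.degree_mul_leadingCoeff_inv φ hφ0, hφ]
    set s := r %ₘ u with hs_def
    set g := Polynomial.C φ.leadingCoeff⁻¹ * (r /ₘ u) with hg_def
    have hsdeg : s.degree < 3 := hudeg ▸ Polynomial.degree_modByMonic_lt r hu
    have hr_eq : r = φ * g + s := by
      have h := Polynomial.modByMonic_add_div r u
      rw [hg_def, hs_def, ← mul_assoc, ← hu_def]
      linear_combination (norm := ring_nf) -h
    -- degree bound on g
    have hgdeg : g.degree < (3 * m : ℕ) := by
      rcases eq_or_ne (r /ₘ u) 0 with h0 | h0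
      · rw [hg_def, h0, mul_zero, Polynomial.degree_zero]
        exact WithBot.bot_lt_coe _
      · have hd : (r /ₘ u).degree = ((r /ₘ u).natDegree : WithBot ℕ) :=
          Polynomial.degree_eq_natDegree h0
        have h2 : (u * (r /ₘ u)).degree < ((3 * (m + 1) : ℕ) : WithBot ℕ) := by
          have heq : u * (r /ₘ u) = r - s := by
            rw [hs_def]; linear_combination (Polynomial.modByMonic_add_div r u)
          rw [heq]
          refine lt_of_le_of_lt (Polynomial.degree_sub_le _ _) (max_lt hr ?_)
          refine hsdeg.trans_le ?_
          exact_mod_cast Nat.cast_le.mpr (by omega : (3:ℕ) ≤ 3 * (m+1))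
        rw [Polynomial.degree_mul, hudeg, hd] at h2
        have h3 : ((3 + (r /ₘ u).natDegree : ℕ) : WithBot ℕ) < ((3 * (m+1) : ℕ) : WithBot ℕ) := by
          push_cast
          push_cast at h2
          convert h2 using 2
        have h4 : (r /ₘ u).natDegree < 3 * m := by
          have := Nat.cast_lt (α := WithBot ℕ) |>.mp h3
          omega
        have hgle : g.degree ≤ (r /ₘ u).degree := by
          rw [hg_def]
          refine (Polynomial.degree_mul_le _ _).trans ?_
          calc Polynomial.degree (Polynomial.C φ.leadingCoeff⁻¹) + (r /ₘ u).degree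
              ≤ 0 + (r /ₘ u).degree := add_le_add Polynomial.degree_C_le le_rfl
            _ = (r /ₘ u).degree := by rw [zero_add]
        exact hgle.trans_lt (by rw [hd]; exact_mod_cast Nat.cast_lt.mpr h4)
    obtain ⟨Q', hQ'deg, hQ'mem⟩ := ih g hgdeg
    refine ⟨MvPolynomial.X 1 * Polynomial.aeval (MvPolynomial.X 0) s +
      (MvPolynomial.X 1) ^ 2 * Q', ?_, ?_⟩
    · refine (MvPolynomial.totalDegree_add _ _).trans ?_
      have hsnat : s.natDegree ≤ 2 := by
        rcases eq_or_ne s 0 with h | h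
        · simp [h]
        · exact Nat.lt_succ_iff.mp ((Polynomial.natDegree_lt_iff_degree_lt h).mpr
            (by exact_mod_cast hsdeg))
      have hx1 : (MvPolynomial.X 1 : R2).totalDegree ≤ 1 :=
        le_of_eq (MvPolynomial.totalDegree_X 1)
      have hx2 : ((MvPolynomial.X 1 : R2) ^ 2).totalDegree ≤ 2 := by
        refine (MvPolynomial.totalDegree_pow _ 2).trans ?_
        simp [MvPolynomial.totalDegree_X]
      have t1 : (MvPolynomial.X 1 * Polynomial.aeval (MvPolynomial.X 0) s : R2).totalDegree
          ≤ 1 + 2 :=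
        (MvPolynomial.totalDegree_mul _ _).trans
          (add_le_add hx1 ((totalDegree_aeval_X0 s).trans hsnat))
      have t2 : ((MvPolynomial.X 1 : R2) ^ 2 * Q').totalDegree ≤ 2 + (2 * m + 1) :=
        (MvPolynomial.totalDegree_mul _ _).trans (add_le_add hx2 hQ'deg)
      exact max_le (t1.trans (by omega)) (t2.trans (by omega))
    · set G := Polynomial.aeval (MvPolynomial.X 0 : R2) g with hG
      set Φ := Polynomial.aeval (MvPolynomial.X 0 : R2) φ with hΦ
      have haev : Polynomial.aeval (MvPolynomial.X 0 : R2) r =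
          Φ * G + Polynomial.aeval (MvPolynomial.X 0) s := by
        rw [hr_eq]; simp [hΦ, hG]
      have key : MvPolynomial.X 1 * Polynomial.aeval (MvPolynomial.X 0) r -
          (MvPolynomial.X 1 * Polynomial.aeval (MvPolynomial.X 0) s +
            (MvPolynomial.X 1 : R2) ^ 2 * Q') =
          (-(MvPolynomial.X 1 * G)) * ((MvPolynomial.X 1 : R2) ^ 2 - Φ) +
            (MvPolynomial.X 1) ^ 2 * (MvPolynomial.X 1 * G - Q') := by
        rw [haev]; ring
      rw [key]
      exact Ideal.add_mem _
        (Ideal.mul_mem_left _ _ (Ideal.subset_span rfl))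
        (Ideal.mul_mem_left _ _ hQ'mem)


end CurveDeg

namespace CurveDeg

abbrev PP := Polynomial (Polynomial ℝ)

def Pg (φ : ℝ[X]) : PP := Polynomial.X ^ 2 - Polynomial.C φ

def τ : R2 →ₐ[ℝ] PP := MvPolynomial.aeval ![Polynomial.C Polynomial.X, Polynomial.X]

lemma Pg_monic (φ : ℝ[X]) : (Pg φ).Monic :=
  Polynomial.monic_X_pow_sub (Polynomial.degree_C_le.trans_lt (by norm_num))

lemma Pg_degree (φ : ℝ[X]) : (Pg φ).degree = 2 := by
  have h : (Polynomial.C φ : PP).degree < (Polynomial.X ^ 2 : PP).degree := by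
    rw [Polynomial.degree_X_pow]
    exact Polynomial.degree_C_le.trans_lt (by norm_num)
  rw [Pg, Polynomial.degree_sub_eq_left_of_degree_lt h, Polynomial.degree_X_pow]
  rfl

lemma τ_X0 : τ (MvPolynomial.X 0) = Polynomial.C Polynomial.X := by
  simp [τ]

lemma τ_X1 : τ (MvPolynomial.X 1) = Polynomial.X := by
  simp [τ]

lemma τ_aeval (φ : ℝ[X]) :
    τ (Polynomial.aeval (MvPolynomial.X 0 : R2) φ) = Polynomial.C φ := by
  rw [← Polynomial.aeval_algHom_apply τ (MvPolynomial.X 0) φ, τ_X0]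
  rw [Polynomial.aeval_def, Polynomial.eval₂_eq_sum, Polynomial.sum]
  calc ∑ n ∈ φ.support, algebraMap ℝ PP (φ.coeff n) * Polynomial.C Polynomial.X ^ n
      = Polynomial.C (∑ n ∈ φ.support, Polynomial.C (φ.coeff n) * Polynomial.X ^ n) := by
        rw [map_sum]
        refine Finset.sum_congr rfl fun n _ => ?_
        rw [Polynomial.algebraMap_apply, ← map_pow, ← map_mul, Polynomial.algebraMap_eq]
    _ = Polynomial.C φ := by
        congr 1
        rw [← Polynomial.sum_def φ fun n a => Polynomial.C a * Polynomial.X ^ n]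
        exact Polynomial.sum_C_mul_X_pow_eq φ

lemma τ_gen (φ : ℝ[X]) :
    τ ((MvPolynomial.X 1 : R2) ^ 2 - Polynomial.aeval (MvPolynomial.X 0) φ) = Pg φ := by
  rw [map_sub, map_pow, τ_X1, τ_aeval, Pg]

end CurveDeg

namespace CurveDeg
open Polynomial

lemma modpow (φ u : ℝ[X]) (b : ℕ) :
    (Polynomial.C u * Polynomial.X ^ b) %ₘ Pg φ =
      Polynomial.C (u * φ ^ (b / 2)) * Polynomial.X ^ (b % 2) := by
  set j := b / 2 with hj
  set r := b % 2 with hr2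
  have hb : b = 2 * j + r := (Nat.div_add_mod b 2).symm.trans (by ring)
  have hdvd : Pg φ ∣ (Polynomial.C u * Polynomial.X ^ b -
      Polynomial.C (u * φ ^ j) * Polynomial.X ^ r) := by
    have h1 : (Polynomial.C u * Polynomial.X ^ b -
        Polynomial.C (u * φ ^ j) * Polynomial.X ^ r) =
        (Polynomial.C u * Polynomial.X ^ r) *
          ((Polynomial.X ^ 2) ^ j - (Polynomial.C φ) ^ j) := by
      rw [hb, map_mul, map_pow]
      ring
    rw [h1]
    exact Dvd.dvd.mul_left (sub_dvd_pow_sub_pow _ _ j) _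
  have heq : (Polynomial.C u * Polynomial.X ^ b) %ₘ Pg φ =
      (Polynomial.C (u * φ ^ j) * Polynomial.X ^ r) %ₘ Pg φ := by
    have := (Polynomial.modByMonic_eq_zero_iff_dvd (Pg_monic φ)).mpr hdvd
    rw [Polynomial.sub_modByMonic] at this
    exact sub_eq_zero.mp this
  rw [heq, Polynomial.modByMonic_eq_self_iff (Pg_monic φ), Pg_degree]
  refine lt_of_le_of_lt (Polynomial.degree_mul_le _ _) ?_
  have h1 : (Polynomial.C (u * φ ^ j)).degree ≤ 0 := Polynomial.degree_C_le
  have h2 : (Polynomial.X ^ r : PP).degree ≤ 1 := by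
    rw [Polynomial.degree_X_pow]
    exact_mod_cast Nat.cast_le.mpr (by omega : r ≤ 1)
  calc (Polynomial.C (u * φ ^ j)).degree + (Polynomial.X ^ r : PP).degree
      ≤ 0 + 1 := add_le_add h1 h2
    _ < 2 := by norm_num

end CurveDeg

namespace CurveDeg
open Polynomial

def NF (φ : ℝ[X]) (Q : R2) : ℝ[X] := ((τ Q) %ₘ Pg φ).coeff 1

lemma τ_monomial (s : Fin 2 →₀ ℕ) (c : ℝ) :
    τ (MvPolynomial.monomial s c) =
      Polynomial.C (Polynomial.C c * Polynomial.X ^ (s 0)) * Polynomial.X ^ (s 1) := by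
  rw [τ, MvPolynomial.aeval_monomial, Finsupp.prod_pow]
  rw [Fin.prod_univ_two]
  simp only [Matrix.cons_val_zero, Matrix.cons_val_one, Matrix.head_cons]
  rw [Polynomial.algebraMap_apply, Polynomial.algebraMap_eq, map_mul, map_pow]
  ring

lemma NF_monomial (φ : ℝ[X]) (s : Fin 2 →₀ ℕ) (c : ℝ) :
    NF φ (MvPolynomial.monomial s c) =
      if s 1 % 2 = 1 then Polynomial.C c * Polynomial.X ^ (s 0) * φ ^ (s 1 / 2) else 0 := by
  rw [NF, τ_monomial, modpow]
  rcases Nat.mod_two_eq_zero_or_one (s 1) with h | h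
  · rw [h]
    simp [← map_pow, ← map_mul, Polynomial.coeff_C]
  · rw [h]
    simp [← map_pow, ← map_mul, Polynomial.coeff_C_mul, mul_assoc]

lemma NF_sum (φ : ℝ[X]) (Q : R2) :
    NF φ Q = ∑ s ∈ Q.support, NF φ (MvPolynomial.monomial s (MvPolynomial.coeff s Q)) := by
  conv_lhs => rw [NF, MvPolynomial.as_sum Q]
  rw [map_sum]
  have hmod : (∑ s ∈ Q.support, τ (MvPolynomial.monomial s (MvPolynomial.coeff s Q))) %ₘ Pg φ
      = ∑ s ∈ Q.support, (τ (MvPolynomial.monomial s (MvPolynomial.coeff s Q))) %ₘ Pg φ := by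
    classical
    induction Q.support using Finset.induction with
    | empty => simp
    | insert _ _ h ih => rw [Finset.sum_insert h, Finset.sum_insert h,
        Polynomial.add_modByMonic, ih]
  rw [hmod, Polynomial.finset_sum_coeff]
  rfl

end CurveDeg

namespace CurveDeg
open Polynomial

lemma NF_degree (φ : ℝ[X]) (hφ : φ.degree = 3) (n : ℕ) (Q : R2)
    (hQ : Q.totalDegree ≤ 2 * n) :
    (NF φ Q).degree ≤ ((3 * n - 2 : ℕ) : WithBot ℕ) := by
  rw [NF_sum]
  refine (Polynomial.degree_sum_le _ _).trans (Finset.sup_le fun s hs => ?_)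
  rw [NF_monomial]
  split_ifs with h
  · have hst : s 0 + s 1 ≤ 2 * n := by
      have h1 := MvPolynomial.le_totalDegree hs
      have h2 : (s.sum fun _ e => e) = s 0 + s 1 := by
        rw [Finsupp.sum_fintype _ _ (fun _ => rfl), Fin.sum_univ_two]
      omega
    have hd1 : (Polynomial.C (MvPolynomial.coeff s Q) * Polynomial.X ^ (s 0) : ℝ[X]).degree ≤ (s 0 : WithBot ℕ) := by
      refine (Polynomial.degree_mul_le _ _).trans ?_
      calc (Polynomial.C (MvPolynomial.coeff s Q)).degree + (Polynomial.X ^ (s 0) : ℝ[X]).degree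
          ≤ 0 + (s 0 : WithBot ℕ) := add_le_add Polynomial.degree_C_le
            (le_of_eq (Polynomial.degree_X_pow _))
        _ = (s 0 : WithBot ℕ) := zero_add _
    have hd2 : (φ ^ (s 1 / 2)).degree ≤ ((3 * (s 1 / 2) : ℕ) : WithBot ℕ) := by
      rw [Polynomial.degree_pow, hφ]
      rw [nsmul_eq_mul]
      exact_mod_cast le_of_eq (by ring)
    refine (Polynomial.degree_mul_le _ _).trans ?_
    calc (Polynomial.C (MvPolynomial.coeff s Q) * Polynomial.X ^ (s 0)).degree + (φ ^ (s 1 / 2)).degree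
        ≤ ((s 0 : ℕ) : WithBot ℕ) + ((3 * (s 1 / 2) : ℕ) : WithBot ℕ) := add_le_add hd1 hd2
      _ = ((s 0 + 3 * (s 1 / 2) : ℕ) : WithBot ℕ) := by push_cast; ring
      _ ≤ ((3 * n - 2 : ℕ) : WithBot ℕ) := by
          refine Nat.cast_le.mpr ?_
          omega
  · simp

lemma NF_target (φ : ℝ[X]) (k : ℕ) :
    NF φ ((MvPolynomial.X 1 : R2) * (MvPolynomial.X 0 : R2) ^ k) = Polynomial.X ^ k := by
  have hτ : τ ((MvPolynomial.X 1 : R2) * (MvPolynomial.X 0 : R2) ^ k) =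
      Polynomial.C (Polynomial.X ^ k) * Polynomial.X ^ 1 := by
    rw [map_mul, map_pow, τ_X0, τ_X1, ← map_pow]
    ring
  rw [NF, hτ, modpow]
  simp [← map_pow, Polynomial.coeff_C_mul]

end CurveDeg


open CurveDeg in
/-- The minimal degree of `y·x^{3n-1}` on the cubic curve `y² = φ(x)`,
`deg φ = 3`, equals `2n + 1`. -/
theorem curve_degree_y_x_pow_cubic
    (φ : Polynomial ℝ) (hφ : φ.degree = 3) (n : ℕ) (hn : 1 ≤ n) :
    (∃ Q : MvPolynomial (Fin 2) ℝ, Q.totalDegree ≤ 2 * n + 1 ∧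
      (MvPolynomial.X 1 : MvPolynomial (Fin 2) ℝ) *
        (MvPolynomial.X 0 : MvPolynomial (Fin 2) ℝ) ^ (3 * n - 1) - Q ∈
        Ideal.span {(MvPolynomial.X 1 : MvPolynomial (Fin 2) ℝ) ^ 2 -
          Polynomial.aeval (MvPolynomial.X 0 : MvPolynomial (Fin 2) ℝ) φ}) ∧
    (∀ Q : MvPolynomial (Fin 2) ℝ,
      (MvPolynomial.X 1 : MvPolynomial (Fin 2) ℝ) *
        (MvPolynomial.X 0 : MvPolynomial (Fin 2) ℝ) ^ (3 * n - 1) - Q ∈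
        Ideal.span {(MvPolynomial.X 1 : MvPolynomial (Fin 2) ℝ) ^ 2 -
          Polynomial.aeval (MvPolynomial.X 0 : MvPolynomial (Fin 2) ℝ) φ} →
      2 * n + 1 ≤ Q.totalDegree) := by
  constructor
  · obtain ⟨Q, hQd, hQm⟩ := upper φ hφ n (Polynomial.X ^ (3 * n - 1))
      (by rw [Polynomial.degree_X_pow]; exact Nat.cast_lt.mpr (by omega))
    refine ⟨Q, hQd, ?_⟩
    have he : Polynomial.aeval (MvPolynomial.X 0 : R2) (Polynomial.X ^ (3 * n - 1) : ℝ[X]) =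
        (MvPolynomial.X 0 : R2) ^ (3 * n - 1) := by simp
    rwa [he] at hQm
  · intro Q hmem
    by_contra hlt
    push_neg at hlt
    have hQd : Q.totalDegree ≤ 2 * n := by omega
    have hdvd := Ideal.mem_span_singleton.mp hmem
    have hPdvd : Pg φ ∣ τ ((MvPolynomial.X 1 : R2) * (MvPolynomial.X 0) ^ (3 * n - 1)) - τ Q := by
      rw [← map_sub, ← τ_gen φ]
      exact map_dvd τ.toRingHom hdvd
    have hNF : NF φ ((MvPolynomial.X 1 : R2) * (MvPolynomial.X 0) ^ (3 * n - 1)) = NF φ Q := by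
      have h0 := (Polynomial.modByMonic_eq_zero_iff_dvd (Pg_monic φ)).mpr hPdvd
      rw [Polynomial.sub_modByMonic] at h0
      have h1 := sub_eq_zero.mp h0
      unfold NF
      rw [h1]
    have h1 : (NF φ Q).degree ≤ ((3 * n - 2 : ℕ) : WithBot ℕ) := NF_degree φ hφ n Q hQd
    rw [← hNF, NF_target, Polynomial.degree_X_pow] at h1
    have h2 := Nat.cast_le.mp h1
    omega
end
end

section
/- Curve-degree of y·x^{4n−2} on an even quartic curve y² = φ(x) (degree claim in the proof of Proposition 4.1, case (eq. for Y^{(2,4)})): Suppose φ is even (φ.comp(−X) = φ, i.e. all odd-degree coefficients of φ vanish) and Polynomial.degree φ = 4, and let n ≥ 1. Then: (a) there exists Q ∈ R with totalDegree Q ≤ 2n + 1 and y * x^(4n − 2) − Q ∈ I_2; and (b) for every Q ∈ R with y * x^(4n − 2) − Q ∈ I_2, one has 2n + 1 ≤ totalDegree Q. Hence the minimal degree of y·x^{4n−2} on the curve y² = φ(x) equals 2n + 1. -/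
open MvPolynomial

noncomputable section
namespace CurveDegAux

lemma coeff_comp_neg_X (p : Polynomial ℝ) (k : ℕ) :
    (p.comp (-Polynomial.X)).coeff k = (-1)^k * p.coeff k := by
  induction p using Polynomial.induction_on' with
  | add p q hp hq => simp [Polynomial.add_comp, hp, hq, mul_add]
  | monomial n a =>
    rw [Polynomial.monomial_comp]
    have h1 : (-Polynomial.X : Polynomial ℝ) ^ n = Polynomial.C ((-1:ℝ)^n) * Polynomial.X ^ n := by
      rw [neg_pow, map_pow, map_neg, map_one]
    rw [h1, ← mul_assoc, ← Polynomial.C_mul, Polynomial.coeff_C_mul, Polynomial.coeff_X_pow,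
      Polynomial.coeff_monomial]
    rcases eq_or_ne k n with rfl | h
    · simp [mul_comm]
    · simp [h, Ne.symm h]

lemma tdeg_mul_le {p q : MvPolynomial (Fin 2) ℝ} {dp dq : ℕ}
    (hp : p.totalDegree ≤ dp) (hq : q.totalDegree ≤ dq) :
    (p * q).totalDegree ≤ dp + dq :=
  (totalDegree_mul p q).trans (add_le_add hp hq)

def W : MvPolynomial (Fin 2) ℝ →ₐ[ℝ] Polynomial (MvPolynomial (Fin 2) ℝ) :=
  MvPolynomial.aeval ![Polynomial.C (MvPolynomial.X 0) * Polynomial.X,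
    Polynomial.C (MvPolynomial.X 1) * Polynomial.X ^ 2]

lemma W_X0 : W (X 0) = Polynomial.C (X 0) * Polynomial.X := by simp [W]
lemma W_X1 : W (X 1) = Polynomial.C (X 1) * Polynomial.X ^ 2 := by simp [W]
lemma W_C (r : ℝ) : W (MvPolynomial.C r) = Polynomial.C (MvPolynomial.C r) := by
  simp [W, MvPolynomial.algebraMap_eq, Polynomial.algebraMap_apply]

lemma W_monomial (m : Fin 2 →₀ ℕ) (r : ℝ) :
    W (monomial m r) = Polynomial.C (monomial m r) * Polynomial.X ^ (m 0 + 2 * m 1) := by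
  rw [W, MvPolynomial.aeval_monomial, Finsupp.prod_fintype _ _ (fun i => pow_zero _),
    Fin.prod_univ_two, monomial_eq, Finsupp.prod_fintype _ _ (fun i => pow_zero _),
    Fin.prod_univ_two]
  simp only [Matrix.cons_val_zero, Matrix.cons_val_one, Matrix.head_cons,
    MvPolynomial.algebraMap_eq, Polynomial.algebraMap_apply]
  rw [mul_pow, mul_pow, ← Polynomial.C_pow, ← Polynomial.C_pow, ← pow_mul, map_mul, map_mul]
  ring

lemma coeff_W (F : MvPolynomial (Fin 2) ℝ) (j : ℕ) :
    (W F).coeff j =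
      ∑ m ∈ F.support, if j = m 0 + 2 * m 1 then monomial m (F.coeff m) else 0 := by
  conv_lhs => rw [F.as_sum]
  rw [map_sum, Polynomial.finset_sum_coeff]
  refine Finset.sum_congr rfl fun m hm => ?_
  rw [W_monomial, Polynomial.coeff_C_mul, Polynomial.coeff_X_pow]
  split_ifs <;> simp

lemma natDegree_W_le (F : MvPolynomial (Fin 2) ℝ) : (W F).natDegree ≤ 2 * F.totalDegree := by
  refine Polynomial.natDegree_le_iff_coeff_eq_zero.mpr fun j hj => ?_
  rw [coeff_W]
  refine Finset.sum_eq_zero fun m hm => ?_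
  have h1 : m 0 + m 1 ≤ F.totalDegree := by
    have := MvPolynomial.le_totalDegree hm
    rwa [Finsupp.sum_fintype _ _ (fun i => rfl), Fin.sum_univ_two] at this
  rw [if_neg (by omega)]

lemma W_G (a b c : ℝ) :
    W (X 1 ^ 2 - (MvPolynomial.C a + MvPolynomial.C b * X 0 ^ 2 + MvPolynomial.C c * X 0 ^ 4)) =
      Polynomial.C (X 1 ^ 2 - MvPolynomial.C c * X 0 ^ 4) * Polynomial.X ^ 4
        - Polynomial.C (MvPolynomial.C b * X 0 ^ 2) * Polynomial.X ^ 2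
        - Polynomial.C (MvPolynomial.C a) := by
  rw [map_sub, map_add, map_add, map_pow, map_mul, map_mul, map_pow, map_pow, W_X0, W_X1,
    W_C, W_C, W_C]
  simp only [map_sub, map_mul, map_pow]
  ring

lemma coeff4_ne (c : ℝ) :
    (X 1 ^ 2 - MvPolynomial.C c * X 0 ^ 4 : MvPolynomial (Fin 2) ℝ) ≠ 0 := by
  intro h
  have h2 := congrArg (MvPolynomial.coeff (Finsupp.single 1 2)) h
  have hne : (Finsupp.single (0 : Fin 2) 4) ≠ Finsupp.single 1 2 := by
    intro hcon
    have := DFunLike.congr_fun hcon 1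
    simp [Finsupp.single_apply] at this
  simp [X_pow_eq_monomial, coeff_monomial, MvPolynomial.coeff_C_mul, hne] at h2

lemma no_rep (c q : ℝ) (hc : c ≠ 0) (n : ℕ) (hn : 1 ≤ n) (R0 : MvPolynomial (Fin 2) ℝ)
    (EQ : X 1 * X 0 ^ (4*n-2) - monomial (Finsupp.single 1 (2*n)) q
        = R0 * (X 1 ^ 2 - MvPolynomial.C c * X 0 ^ 4)) : False := by
  have hmono : (monomial (Finsupp.single (1 : Fin 2) (2*n)) q : MvPolynomial (Fin 2) ℝ)
      = MvPolynomial.C q * X 1 ^ (2*n) := by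
    rw [X_pow_eq_monomial, C_mul_monomial, mul_one]
  rw [hmono] at EQ
  have key : ∀ s : ℂ, s^2 = (c : ℂ) → s = (q : ℂ) * s^(2*n) := by
    intro s hs
    have h := congrArg (MvPolynomial.aeval
      ![(Polynomial.X : Polynomial ℂ), Polynomial.C s * Polynomial.X ^ 2]) EQ
    simp only [map_sub, map_mul, map_pow, MvPolynomial.aeval_X, MvPolynomial.aeval_C,
      Matrix.cons_val_zero, Matrix.cons_val_one, Matrix.head_cons] at h
    have hzero : ((Polynomial.C s * Polynomial.X ^ 2) ^ 2
        - (algebraMap ℝ (Polynomial ℂ)) c * Polynomial.X ^ 4 : Polynomial ℂ) = 0 := by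
      rw [Polynomial.algebraMap_apply, mul_pow, ← Polynomial.C_pow, hs, ← pow_mul,
        Complex.coe_algebraMap]
      ring
    rw [hzero, mul_zero] at h
    have e1 : (Polynomial.C s * Polynomial.X ^ 2 * Polynomial.X ^ (4*n-2) : Polynomial ℂ)
        = Polynomial.C s * Polynomial.X ^ (4*n) := by
      rw [mul_assoc, ← pow_add, show 2 + (4*n-2) = 4*n from by omega]
    rw [e1, sub_eq_zero] at h
    rw [Polynomial.algebraMap_apply, Complex.coe_algebraMap, mul_pow, ← Polynomial.C_pow,
      ← pow_mul, show 2*(2*n) = 4*n from by omega, ← mul_assoc, ← Polynomial.C_mul] at h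
    have h4 := congrArg (fun p : Polynomial ℂ => p.coeff (4*n)) h
    simp only [Polynomial.coeff_C_mul, Polynomial.coeff_X_pow, eq_self_iff_true, if_true,
      mul_one] at h4
    exact h4
  obtain ⟨s, hs⟩ := IsAlgClosed.exists_pow_nat_eq (c : ℂ) (n := 2) (by norm_num)
  have h1 := key s hs
  have h2 := key (-s) (by rw [neg_pow, Even.neg_one_pow even_two, one_mul]; exact hs)
  rw [Even.neg_pow ⟨n, by ring⟩] at h2
  have hs0 : s = 0 := by
    have : (2 : ℂ) * s = 0 := by linear_combination h1 - h2
    simpa using this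
  rw [hs0] at hs
  simp only [ne_eq, zero_pow, OfNat.ofNat_ne_zero, not_false_eq_true] at hs
  exact hc (by exact_mod_cast hs.symm)

lemma exists_Q (a b c : ℝ) (hc : c ≠ 0) :
    ∀ m : ℕ, ∃ Q : MvPolynomial (Fin 2) ℝ, Q.totalDegree ≤ m + 2 ∧
      X 1 * X 0 ^ (2 * m) - Q ∈
        Ideal.span {X 1 ^ 2 - (MvPolynomial.C a + MvPolynomial.C b * X 0 ^ 2 +
          MvPolynomial.C c * X 0 ^ 4)} := by
  have hcc : (MvPolynomial.C c⁻¹ : MvPolynomial (Fin 2) ℝ) * MvPolynomial.C c = 1 := by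
    rw [← MvPolynomial.C_mul, inv_mul_cancel₀ hc, MvPolynomial.C_1]
  intro m
  induction m using Nat.strong_induction_on with
  | _ m ih =>
    match m with
    | 0 =>
      refine ⟨X 1 * X 0 ^ 0, ?_, by simp⟩
      have := tdeg_mul_le (p := X 1) (q := X 0 ^ 0) (dp := 1) (dq := 0)
        (le_of_eq (totalDegree_X 1)) (by simp)
      omega
    | 1 =>
      refine ⟨X 1 * X 0 ^ 2, ?_, by simp⟩
      have := tdeg_mul_le (p := X 1) (q := X 0 ^ 2) (dp := 1) (dq := 2)
        (le_of_eq (totalDegree_X 1)) (by simp)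
      omega
    | (m+2) =>
      obtain ⟨Q0, hQ0d, hQ0⟩ := ih m (by omega)
      obtain ⟨Q1, hQ1d, hQ1⟩ := ih (m+1) (by omega)
      set G : MvPolynomial (Fin 2) ℝ := X 1 ^ 2 - (MvPolynomial.C a + MvPolynomial.C b * X 0 ^ 2 +
          MvPolynomial.C c * X 0 ^ 4) with hG
      refine ⟨MvPolynomial.C c⁻¹ * (X 1 ^ 2 * Q0 - MvPolynomial.C b * Q1 - MvPolynomial.C a * Q0),
        ?_, ?_⟩
      · have e1 : (X 1 ^ 2 * Q0 : MvPolynomial (Fin 2) ℝ).totalDegree ≤ m + 4 := by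
          have := tdeg_mul_le (p := X 1 ^ 2) (q := Q0) (dp := 2) (dq := m + 2)
            (totalDegree_X_pow (1 : Fin 2) 2).le hQ0d
          omega
        have e2 : (MvPolynomial.C b * Q1 : MvPolynomial (Fin 2) ℝ).totalDegree ≤ m + 4 := by
          have := tdeg_mul_le (p := MvPolynomial.C b) (q := Q1) (dp := 0) (dq := m + 3)
            (totalDegree_C b).le hQ1d
          omega
        have e3 : (MvPolynomial.C a * Q0 : MvPolynomial (Fin 2) ℝ).totalDegree ≤ m + 4 := by
          have := tdeg_mul_le (p := MvPolynomial.C a) (q := Q0) (dp := 0) (dq := m + 2)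
            (totalDegree_C a).le hQ0d
          omega
        have e4 := totalDegree_sub (X 1 ^ 2 * Q0 - MvPolynomial.C b * Q1) (MvPolynomial.C a * Q0)
        have e5 := totalDegree_sub (X 1 ^ 2 * Q0) (MvPolynomial.C b * Q1)
        have e6 := tdeg_mul_le (p := MvPolynomial.C c⁻¹)
          (q := X 1 ^ 2 * Q0 - MvPolynomial.C b * Q1 - MvPolynomial.C a * Q0)
          (dp := 0) (dq := (X 1 ^ 2 * Q0 - MvPolynomial.C b * Q1 - MvPolynomial.C a * Q0).totalDegree)
          (totalDegree_C c⁻¹).le le_rfl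
        omega
      · have key : X 1 * X 0 ^ (2 * (m+2)) -
            MvPolynomial.C c⁻¹ * (X 1 ^ 2 * Q0 - MvPolynomial.C b * Q1 - MvPolynomial.C a * Q0) =
            MvPolynomial.C c⁻¹ * ((-(X 1 * X 0 ^ (2*m))) * G
              + X 1 ^ 2 * (X 1 * X 0 ^ (2 * m) - Q0)
              - MvPolynomial.C b * (X 1 * X 0 ^ (2 * (m+1)) - Q1)
              - MvPolynomial.C a * (X 1 * X 0 ^ (2 * m) - Q0)) := by
          rw [hG]
          linear_combination (-(X 1 * X 0 ^ (2*m+4)) : MvPolynomial (Fin 2) ℝ) * hcc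
        rw [key]
        exact Ideal.mul_mem_left _ _ (Ideal.sub_mem _ (Ideal.sub_mem _ (Ideal.add_mem _
          (Ideal.mul_mem_left _ _ (Ideal.subset_span rfl))
          (Ideal.mul_mem_left _ _ hQ0)) (Ideal.mul_mem_left _ _ hQ1))
          (Ideal.mul_mem_left _ _ hQ0))

lemma partB (a b c : ℝ) (hc : c ≠ 0) (n : ℕ) (hn : 1 ≤ n) (Q : MvPolynomial (Fin 2) ℝ)
    (hmem : X 1 * X 0 ^ (4*n - 2) - Q ∈
      Ideal.span {X 1 ^ 2 - (MvPolynomial.C a + MvPolynomial.C b * X 0 ^ 2 +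
        MvPolynomial.C c * X 0 ^ 4)}) :
    2*n + 1 ≤ Q.totalDegree := by
  by_contra hlt
  push_neg at hlt
  have hQd : Q.totalDegree ≤ 2*n := by omega
  obtain ⟨P, hP⟩ := Ideal.mem_span_singleton'.mp hmem
  set G : MvPolynomial (Fin 2) ℝ := X 1 ^ 2 - (MvPolynomial.C a + MvPolynomial.C b * X 0 ^ 2 +
      MvPolynomial.C c * X 0 ^ 4) with hG
  have W_term : ∀ k : ℕ, W (X 1 * X 0 ^ k)
      = Polynomial.C (X 1 * X 0 ^ k) * Polynomial.X ^ (k+2) := by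
    intro k
    rw [map_mul, map_pow, W_X0, W_X1, mul_pow, ← Polynomial.C_pow, pow_add, map_mul]
    ring
  have hWT : W (X 1 * X 0 ^ (4*n - 2))
      = Polynomial.C (X 1 * X 0 ^ (4*n-2)) * Polynomial.X ^ (4*n) := by
    rw [W_term, show (4*n-2)+2 = 4*n from by omega]
  have hWDdeg : (W (X 1 * X 0 ^ (4*n-2) - Q)).natDegree ≤ 4*n := by
    rw [map_sub]
    refine (Polynomial.natDegree_sub_le _ _).trans ?_
    rw [hWT]
    have t1 := Polynomial.natDegree_C_mul_X_pow_le (X 1 * X 0 ^ (4*n-2) : MvPolynomial (Fin 2) ℝ) (4*n)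
    have t2 := natDegree_W_le Q
    simp only [max_le_iff]
    exact ⟨t1, t2.trans (by omega)⟩
  have hWGdeg : (W G).natDegree ≤ 4 := by
    rw [hG, W_G]
    refine Polynomial.natDegree_le_iff_coeff_eq_zero.mpr fun N hN => ?_
    simp only [Polynomial.coeff_sub, Polynomial.coeff_C_mul, Polynomial.coeff_X_pow,
      Polynomial.coeff_C, if_neg (by omega : ¬ N = 4), if_neg (by omega : ¬ N = 2),
      if_neg (by omega : ¬ N = 0), mul_zero, sub_zero]
  have hWG4 : (W G).coeff 4 = X 1 ^ 2 - MvPolynomial.C c * X 0 ^ 4 := by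
    rw [hG, W_G]
    simp only [Polynomial.coeff_sub, Polynomial.coeff_C_mul, Polynomial.coeff_X_pow,
      Polynomial.coeff_C]
    norm_num
  have hWGne : W G ≠ 0 := fun h => coeff4_ne c (by rw [← hWG4, h, Polynomial.coeff_zero])
  have hPcoeff : ∀ j, 4*n - 4 < j → (W P).coeff j = 0 := by
    intro j hj
    by_cases hWP : W P = 0
    · simp [hWP]
    · refine Polynomial.coeff_eq_zero_of_natDegree_lt ?_
      have h1 : (W P).natDegree + (W G).natDegree ≤ 4*n := by
        rw [← Polynomial.natDegree_mul hWP hWGne, ← map_mul, hP]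
        exact hWDdeg
      have h4 : 4 ≤ (W G).natDegree :=
        Polynomial.le_natDegree_of_ne_zero (by rw [hWG4]; exact coeff4_ne c)
      omega
  have hQtop : (W Q).coeff (4*n)
      = monomial (Finsupp.single 1 (2*n)) (Q.coeff (Finsupp.single 1 (2*n))) := by
    rw [coeff_W]
    have step : ∀ m ∈ Q.support,
        (if 4*n = m 0 + 2 * m 1 then monomial m (Q.coeff m) else 0)
        = (if m = Finsupp.single 1 (2*n)
            then monomial (Finsupp.single 1 (2*n)) (Q.coeff (Finsupp.single 1 (2*n))) else 0) := by
      intro m hm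
      have hsum : m 0 + m 1 ≤ 2*n := by
        have := MvPolynomial.le_totalDegree hm
        rw [Finsupp.sum_fintype _ _ (fun i => rfl), Fin.sum_univ_two] at this
        omega
      by_cases h : 4*n = m 0 + 2 * m 1
      · have h0 : m 0 = 0 := by omega
        have h1 : m 1 = 2*n := by omega
        have hm0 : m = Finsupp.single 1 (2*n) := by
          ext i
          fin_cases i <;> simp [h0, h1, Finsupp.single_apply]
        rw [if_pos h, if_pos hm0, hm0]
      · rw [if_neg h, if_neg]
        intro hcon
        rw [hcon] at h
        simp [Finsupp.single_apply] at h
        omega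
    rw [Finset.sum_congr rfl step, Finset.sum_ite_eq' Q.support (Finsupp.single 1 (2*n))]
    by_cases hs : Finsupp.single (1 : Fin 2) (2*n) ∈ Q.support
    · rw [if_pos hs]
    · rw [if_neg hs, MvPolynomial.notMem_support_iff.mp hs, map_zero]
  have h1 : (W (X 1 * X 0 ^ (4*n-2) - Q)).coeff (4*n)
      = X 1 * X 0 ^ (4*n-2)
        - monomial (Finsupp.single 1 (2*n)) (Q.coeff (Finsupp.single 1 (2*n))) := by
    rw [map_sub, Polynomial.coeff_sub, hWT, hQtop]
    simp only [Polynomial.coeff_C_mul, Polynomial.coeff_X_pow, eq_self_iff_true, if_true, mul_one]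
  have h2 : (W (X 1 * X 0 ^ (4*n-2) - Q)).coeff (4*n)
      = (W P).coeff (4*n-4) * (W G).coeff 4 := by
    rw [← hP, map_mul, Polynomial.coeff_mul]
    refine Finset.sum_eq_single ((4*n-4 : ℕ), (4 : ℕ)) ?_ ?_
    · rintro ⟨i, j⟩ hmem2 hne
      rw [Finset.HasAntidiagonal.mem_antidiagonal] at hmem2
      rcases lt_or_ge (4*n-4) i with hi | hi
      · rw [hPcoeff i hi, zero_mul]
      · rcases eq_or_ne j 4 with rfl | hj4
        · exfalso
          apply hne
          have : i = 4*n-4 := by omega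
          rw [this]
        · have hj5 : 4 < j := by omega
          rw [Polynomial.coeff_eq_zero_of_natDegree_lt (lt_of_le_of_lt hWGdeg hj5), mul_zero]
    · intro hnotmem
      exact absurd (Finset.HasAntidiagonal.mem_antidiagonal.mpr (by omega)) hnotmem
  rw [h1, hWG4] at h2
  exact no_rep c _ hc n hn _ h2

end CurveDegAux

end
/-- The minimal degree of `y·x^{4n-2}` on an even quartic curve `y² = φ(x)`,
`deg φ = 4`, `φ` even, equals `2n + 1`. -/
theorem curve_degree_y_x_pow_even_quartic
    (φ : Polynomial ℝ) (hev : φ.comp (-Polynomial.X) = φ) (hφ : φ.degree = 4)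
    (n : ℕ) (hn : 1 ≤ n) :
    (∃ Q : MvPolynomial (Fin 2) ℝ, Q.totalDegree ≤ 2 * n + 1 ∧
      (MvPolynomial.X 1 : MvPolynomial (Fin 2) ℝ) *
        (MvPolynomial.X 0 : MvPolynomial (Fin 2) ℝ) ^ (4 * n - 2) - Q ∈
        Ideal.span {(MvPolynomial.X 1 : MvPolynomial (Fin 2) ℝ) ^ 2 -
          Polynomial.aeval (MvPolynomial.X 0 : MvPolynomial (Fin 2) ℝ) φ}) ∧
    (∀ Q : MvPolynomial (Fin 2) ℝ,
      (MvPolynomial.X 1 : MvPolynomial (Fin 2) ℝ) *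
        (MvPolynomial.X 0 : MvPolynomial (Fin 2) ℝ) ^ (4 * n - 2) - Q ∈
        Ideal.span {(MvPolynomial.X 1 : MvPolynomial (Fin 2) ℝ) ^ 2 -
          Polynomial.aeval (MvPolynomial.X 0 : MvPolynomial (Fin 2) ℝ) φ} →
      2 * n + 1 ≤ Q.totalDegree) := by
  classical
  set a := φ.coeff 0 with ha
  set b := φ.coeff 2 with hb
  set c := φ.coeff 4 with hcdef
  have hc : c ≠ 0 := Polynomial.coeff_ne_zero_of_eq_degree hφ
  have hodd : ∀ k : ℕ, Odd k → φ.coeff k = 0 := by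
    intro k hk
    have h := CurveDegAux.coeff_comp_neg_X φ k
    rw [hev, Odd.neg_one_pow hk] at h
    linarith
  have hhigh : ∀ k : ℕ, 4 < k → φ.coeff k = 0 := fun k hk =>
    Polynomial.coeff_eq_zero_of_degree_lt (by rw [hφ]; exact_mod_cast hk)
  have hφeq : φ = Polynomial.C a + Polynomial.C b * Polynomial.X ^ 2 +
      Polynomial.C c * Polynomial.X ^ 4 := by
    ext k
    simp only [Polynomial.coeff_add, Polynomial.coeff_C_mul, Polynomial.coeff_X_pow,
      Polynomial.coeff_C]
    match k with
    | 0 => simp [ha]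
    | 1 => simpa using hodd 1 ⟨0, by ring⟩
    | 2 => simp [hb]
    | 3 => simpa using hodd 3 ⟨1, by ring⟩
    | 4 => simp [hcdef]
    | (k+5) => simpa using hhigh (k+5) (by omega)
  have hΦ : Polynomial.aeval (X 0 : MvPolynomial (Fin 2) ℝ) φ
      = MvPolynomial.C a + MvPolynomial.C b * X 0 ^ 2 + MvPolynomial.C c * X 0 ^ 4 := by
    conv_lhs => rw [hφeq]
    simp [MvPolynomial.algebraMap_eq]
  rw [hΦ]
  constructor
  · obtain ⟨Q, hQd, hQm⟩ := CurveDegAux.exists_Q a b c hc (2*n - 1)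
    refine ⟨Q, by omega, ?_⟩
    rw [show 4*n - 2 = 2*(2*n-1) from by omega]
    exact hQm
  · intro Q hQ
    exact CurveDegAux.partB a b c hc n hn Q hQ
end
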